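/- arXiv:1305.6691 — 5 statements merged into one kernel-verified Lean document; each statement's English description precedes it below -/
import Mathlib

section
/- Let X be a real Banach space, let A : X ⇉ X* be monotone, and let B : X ⇉ X* be maximally monotone. Suppose star(dom A) ∩ int(dom B) ≠ ∅, and suppose (z, z*) ∈ X × X* with z ∈ dom A is monotonically related to gra(A + B). Then z ∈ dom B. -/
open Set Filter Topology

noncomputable section

variable {X : Type*} [NormedAddCommGroup X] [NormedSpace ℝ X]

/-- A set-valued operator `A : X ⇉ X*`, identified with its graph,
is monotone if `⟨x − y, x* − y*⟩ ≥ 0` for all `(x, x*), (y, y*)` in the graph. -/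
def IsMonotoneOp (A : Set (X × (X →L[ℝ] ℝ))) : Prop :=
  ∀ p ∈ A, ∀ q ∈ A, 0 ≤ (p.2 - q.2) (p.1 - q.1)

/-- `A` is maximally monotone if it is monotone and its graph is not properly contained
in the graph of any monotone operator. -/
def IsMaxMonotoneOp (A : Set (X × (X →L[ℝ] ℝ))) : Prop :=
  IsMonotoneOp A ∧ ∀ B : Set (X × (X →L[ℝ] ℝ)), IsMonotoneOp B → A ⊆ B → B = A

/-- The domain of a set-valued operator. -/
def opDom (A : Set (X × (X →L[ℝ] ℝ))) : Set X :=
  {x | ∃ xs, (x, xs) ∈ A}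

/-- `(z, z*)` is monotonically related to `S` if `⟨z − y, z* − y*⟩ ≥ 0` for all `(y, y*) ∈ S`. -/
def MonotonicallyRelated (S : Set (X × (X →L[ℝ] ℝ))) (p : X × (X →L[ℝ] ℝ)) : Prop :=
  ∀ q ∈ S, 0 ≤ (p.2 - q.2) (p.1 - q.1)

/-- A maximally monotone operator `A` is of type (FPV) if for every open convex set `U`
meeting `dom A`, every `(x, x*)` with `x ∈ U` monotonically related to
`gra A ∩ (U × X*)` belongs to `gra A`. -/
def IsFPV (A : Set (X × (X →L[ℝ] ℝ))) : Prop :=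
  IsMaxMonotoneOp A ∧
    ∀ U : Set X, IsOpen U → Convex ℝ U → (U ∩ opDom A).Nonempty →
      ∀ x : X, ∀ xs : X →L[ℝ] ℝ, x ∈ U →
        MonotonicallyRelated (A ∩ (U ×ˢ (univ : Set (X →L[ℝ] ℝ)))) (x, xs) →
        (x, xs) ∈ A

/-- The graph of the sum `A + B`: `(A + B)x = {a* + b* : a* ∈ A x, b* ∈ B x}`. -/
def opSum (A B : Set (X × (X →L[ℝ] ℝ))) : Set (X × (X →L[ℝ] ℝ)) :=
  {p | ∃ as bs, (p.1, as) ∈ A ∧ (p.1, bs) ∈ B ∧ p.2 = as + bs}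

/-- The star (centre) of a set `C`: points `x ∈ C` with `[x, c] ⊆ C` for all `c ∈ C`. -/
def starSet (C : Set X) : Set X :=
  {x ∈ C | ∀ c ∈ C, segment ℝ x c ⊆ C}

/-- The Fitzpatrick function of `A`:
`F_A(x, x*) = sup_{(a, a*) ∈ gra A} (⟨x, a*⟩ + ⟨a, x*⟩ − ⟨a, a*⟩)`, with values in `(−∞, +∞]`. -/
def fitz (A : Set (X × (X →L[ℝ] ℝ))) (p : X × (X →L[ℝ] ℝ)) : EReal :=
  ⨆ q ∈ A, ((q.2 p.1 + p.2 q.1 - q.2 q.1 : ℝ) : EReal)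



lemma dual_norm_le_of_forall_le {f : X →L[ℝ] ℝ} {β : ℝ}
    (h : ∀ v : X, ‖v‖ ≤ 1 → f v ≤ β) : ‖f‖ ≤ β := by
  have hβ : 0 ≤ β := by simpa using h 0 (by simp)
  refine f.opNorm_le_bound hβ (fun x => ?_)
  rcases eq_or_ne x 0 with rfl | hx
  · simp
  · have hnx : 0 < ‖x‖ := norm_pos_iff.2 hx
    have hv : ‖‖x‖⁻¹ • x‖ ≤ 1 := by
      rw [norm_smul, norm_inv, norm_norm, inv_mul_cancel₀ hnx.ne']
    have h1 := h _ hv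
    have h2 := h _ (by simpa [norm_neg] using hv : ‖-(‖x‖⁻¹ • x)‖ ≤ 1)
    rw [map_neg] at h2
    have habs : |f (‖x‖⁻¹ • x)| ≤ β := abs_le.2 ⟨by linarith, h1⟩
    have : f (‖x‖⁻¹ • x) = ‖x‖⁻¹ * f x := by rw [map_smul]; simp
    rw [this, abs_mul, abs_inv, abs_norm] at habs
    rw [Real.norm_eq_abs]
    calc |f x| = ‖x‖ * (‖x‖⁻¹ * |f x|) := by field_simp
    _ ≤ ‖x‖ * β := by exact mul_le_mul_of_nonneg_left habs hnx.le
    _ = β * ‖x‖ := mul_comm _ _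

lemma mem_of_monRel {B : Set (X × (X →L[ℝ] ℝ))} (hB : IsMaxMonotoneOp B) {p : X × (X →L[ℝ] ℝ)}
    (h : MonotonicallyRelated B p) : p ∈ B := by
  have key : ∀ a b : X × (X →L[ℝ] ℝ), 0 ≤ (a.2 - b.2) (a.1 - b.1) → 0 ≤ (b.2 - a.2) (b.1 - a.1) := by
    intro a b hab
    have e1 : b.1 - a.1 = -(a.1 - b.1) := by abel
    rw [e1, map_neg]
    have e2 : (b.2 - a.2) (a.1 - b.1) = -((a.2 - b.2) (a.1 - b.1)) := by
      simp [ContinuousLinearMap.sub_apply]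
    rw [e2]
    linarith
  have hmono : IsMonotoneOp (insert p B) := by
    intro q hq r hr
    rw [Set.mem_insert_iff] at hq hr
    rcases hq with rfl | hq
    · rcases hr with rfl | hr
      · simp
      · exact h r hr
    · rcases hr with rfl | hr
      · exact key _ _ (h q hq)
      · exact hB.1 q hq r hr
  have := hB.2 _ hmono (subset_insert p B)
  rw [← this]; exact mem_insert p B


lemma farkas_ball {ι : Type*} (s : Finset ι) (aa : ι → X) (cc : ι → ℝ) (ρ : ℝ) (hρ : 0 ≤ ρ)
    (H : ∀ lam : ι → ℝ, (∀ i ∈ s, 0 ≤ lam i) → (∑ i ∈ s, lam i) = 1 →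
      ∑ i ∈ s, lam i * cc i ≤ ρ * ‖∑ i ∈ s, lam i • aa i‖) :
    ∃ η : X →L[ℝ] ℝ, ‖η‖ ≤ ρ ∧ ∀ i ∈ s, cc i ≤ η (aa i) := by
  classical
  -- unnormalized version
  have H' : ∀ lam : ι → ℝ, (∀ i ∈ s, 0 ≤ lam i) →
      ∑ i ∈ s, lam i * cc i ≤ ρ * ‖∑ i ∈ s, lam i • aa i‖ := by
    intro lam hlam
    set Λ := ∑ i ∈ s, lam i with hΛ
    have hΛ0 : 0 ≤ Λ := Finset.sum_nonneg hlam
    rcases eq_or_lt_of_le hΛ0 with hz | hpos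
    · have hall : ∀ i ∈ s, lam i = 0 := by
        intro i hi
        exact (Finset.sum_eq_zero_iff_of_nonneg hlam).1 hz.symm i hi
      have e1 : ∑ i ∈ s, lam i * cc i = 0 :=
        Finset.sum_eq_zero fun i hi => by rw [hall i hi, zero_mul]
      have e2 : ∑ i ∈ s, lam i • aa i = 0 :=
        Finset.sum_eq_zero fun i hi => by rw [hall i hi, zero_smul]
      rw [e1, e2, norm_zero, mul_zero]
    · have h1 := H (fun i => lam i / Λ) (fun i hi => div_nonneg (hlam i hi) hΛ0)
        (by rw [← Finset.sum_div, ← hΛ, div_self hpos.ne'])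
      have e1 : ∑ i ∈ s, lam i / Λ * cc i = (1 / Λ) * ∑ i ∈ s, lam i * cc i := by
        rw [Finset.mul_sum]; exact Finset.sum_congr rfl fun i _ => by ring
      have e2 : ∑ i ∈ s, (lam i / Λ) • aa i = (1 / Λ) • ∑ i ∈ s, lam i • aa i := by
        rw [Finset.smul_sum]
        exact Finset.sum_congr rfl fun i _ => by
          rw [smul_smul]; congr 1; field_simp
      rw [e1, e2, norm_smul] at h1
      have hn : ‖(1 / Λ : ℝ)‖ = 1 / Λ := by
        rw [Real.norm_eq_abs, abs_of_pos (by positivity)]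
      rw [hn] at h1
      have := mul_le_mul_of_nonneg_left h1 hΛ0
      calc ∑ i ∈ s, lam i * cc i = Λ * ((1/Λ) * ∑ i ∈ s, lam i * cc i) := by
            field_simp
      _ ≤ Λ * (ρ * (1 / Λ * ‖∑ i ∈ s, lam i • aa i‖)) := this
      _ = ρ * ‖∑ i ∈ s, lam i • aa i‖ := by field_simp
  -- the sublinear functional
  set SS : X → Set ℝ := fun x => {t | ∃ lam : ι → ℝ, (∀ i ∈ s, 0 ≤ lam i) ∧
    t = ρ * ‖x + ∑ i ∈ s, lam i • aa i‖ - ∑ i ∈ s, lam i * cc i} with hSS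
  have hmem0 : ∀ x, ρ * ‖x‖ ∈ SS x := by
    intro x
    refine ⟨0, fun i _ => le_refl 0, ?_⟩
    simp
  have hlb : ∀ x, ∀ t ∈ SS x, -(ρ * ‖x‖) ≤ t := by
    rintro x t ⟨lam, hlam, rfl⟩
    have h1 := H' lam hlam
    have h2 : ‖∑ i ∈ s, lam i • aa i‖ ≤ ‖x + ∑ i ∈ s, lam i • aa i‖ + ‖x‖ := by
      calc ‖∑ i ∈ s, lam i • aa i‖ = ‖(x + ∑ i ∈ s, lam i • aa i) - x‖ := by
            rw [add_sub_cancel_left]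
      _ ≤ ‖x + ∑ i ∈ s, lam i • aa i‖ + ‖x‖ := norm_sub_le _ _
    nlinarith [norm_nonneg (∑ i ∈ s, lam i • aa i), norm_nonneg x,
      norm_nonneg (x + ∑ i ∈ s, lam i • aa i)]
  have hbdd : ∀ x, BddBelow (SS x) := fun x => ⟨-(ρ * ‖x‖), fun t ht => hlb x t ht⟩
  have hne : ∀ x, (SS x).Nonempty := fun x => ⟨_, hmem0 x⟩
  set p : X → ℝ := fun x => sInf (SS x) with hp
  have hple : ∀ x, p x ≤ ρ * ‖x‖ := fun x => csInf_le (hbdd x) (hmem0 x)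
  have hplb : ∀ x, -(ρ * ‖x‖) ≤ p x := fun x => le_csInf (hne x) (hlb x)
  -- scaled membership
  have hscale : ∀ c : ℝ, 0 < c → ∀ x, ∀ t ∈ SS x, c * t ∈ SS (c • x) := by
    rintro c hc x t ⟨lam, hlam, rfl⟩
    refine ⟨fun i => c * lam i, fun i hi => mul_nonneg hc.le (hlam i hi), ?_⟩
    have e1 : c • x + ∑ i ∈ s, (c * lam i) • aa i = c • (x + ∑ i ∈ s, lam i • aa i) := by
      rw [smul_add, Finset.smul_sum]
      congr 1
      exact Finset.sum_congr rfl fun i _ => by rw [smul_smul]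
    have e2 : ∑ i ∈ s, c * lam i * cc i = c * ∑ i ∈ s, lam i * cc i := by
      rw [Finset.mul_sum]
      exact Finset.sum_congr rfl fun i _ => by ring
    rw [e1, e2, norm_smul, Real.norm_eq_abs, abs_of_pos hc]
    ring
  have hom_le : ∀ c : ℝ, 0 < c → ∀ x, p (c • x) ≤ c * p x := by
    intro c hc x
    have h1 : ∀ t ∈ SS x, p (c • x) / c ≤ t := by
      intro t ht
      have := csInf_le (hbdd (c • x)) (hscale c hc x t ht)
      rw [div_le_iff₀ hc]
      linarith [this]
    have := le_csInf (hne x) h1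
    rw [div_le_iff₀ hc] at this
    linarith [this]
  have N_hom : ∀ c : ℝ, 0 < c → ∀ x, p (c • x) = c * p x := by
    intro c hc x
    refine le_antisymm (hom_le c hc x) ?_
    have h2 := hom_le c⁻¹ (by positivity) (c • x)
    rw [inv_smul_smul₀ hc.ne'] at h2
    have := mul_le_mul_of_nonneg_left h2 hc.le
    rw [← mul_assoc, mul_inv_cancel₀ hc.ne', one_mul] at this
    linarith [this]
  have N_add : ∀ x y, p (x + y) ≤ p x + p y := by
    intro x y
    refine le_of_forall_pos_le_add ?_
    intro ε hε
    obtain ⟨t, ht, htlt⟩ := exists_lt_of_csInf_lt (hne x) (lt_add_of_pos_right (p x) (half_pos hε))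
    obtain ⟨u, hu, hult⟩ := exists_lt_of_csInf_lt (hne y) (lt_add_of_pos_right (p y) (half_pos hε))
    obtain ⟨lam, hlam, rfl⟩ := ht
    obtain ⟨mu, hmu, rfl⟩ := hu
    have hmemsum : ρ * ‖x + y + ∑ i ∈ s, (lam i + mu i) • aa i‖
        - ∑ i ∈ s, (lam i + mu i) * cc i ∈ SS (x + y) :=
      ⟨fun i => lam i + mu i, fun i hi => add_nonneg (hlam i hi) (hmu i hi), rfl⟩
    have hkey : ρ * ‖x + y + ∑ i ∈ s, (lam i + mu i) • aa i‖
        - ∑ i ∈ s, (lam i + mu i) * cc i ≤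
        (ρ * ‖x + ∑ i ∈ s, lam i • aa i‖ - ∑ i ∈ s, lam i * cc i) +
        (ρ * ‖y + ∑ i ∈ s, mu i • aa i‖ - ∑ i ∈ s, mu i * cc i) := by
      have e1 : x + y + ∑ i ∈ s, (lam i + mu i) • aa i =
          (x + ∑ i ∈ s, lam i • aa i) + (y + ∑ i ∈ s, mu i • aa i) := by
        rw [show ∀ (a b : X), ∑ i ∈ s, (lam i + mu i) • aa i =
          ∑ i ∈ s, lam i • aa i + ∑ i ∈ s, mu i • aa i from fun _ _ => by
            rw [← Finset.sum_add_distrib]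
            exact Finset.sum_congr rfl fun i _ => add_smul _ _ _]
        · abel
        · exact x
        · exact y
      have e2 : ∑ i ∈ s, (lam i + mu i) * cc i =
          ∑ i ∈ s, lam i * cc i + ∑ i ∈ s, mu i * cc i := by
        rw [← Finset.sum_add_distrib]
        exact Finset.sum_congr rfl fun i _ => add_mul _ _ _
      rw [e1, e2]
      have := norm_add_le (x + ∑ i ∈ s, lam i • aa i) (y + ∑ i ∈ s, mu i • aa i)
      nlinarith
    have := (csInf_le (hbdd (x + y)) hmemsum).trans hkey
    linarith
  -- Hahn-Banach extension from the trivial subspace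
  have hf0 : ∀ x : ((⊥ : Submodule ℝ X) : Type _), (0 : (⊥ : Submodule ℝ X) →ₗ[ℝ] ℝ) x ≤ p x := by
    intro x
    have hx0 : (x : X) = 0 := by
      have := x.2
      rwa [Submodule.mem_bot] at this
    have : p (x : X) = 0 := by
      have h1 := hple (x : X)
      have h2 := hplb (x : X)
      rw [hx0] at h1 h2 ⊢
      simp at h1 h2
      linarith
    simp [this]
  obtain ⟨g, -, hg⟩ := exists_extension_of_le_sublinear
    ⟨⊥, (0 : (⊥ : Submodule ℝ X) →ₗ[ℝ] ℝ)⟩ p N_hom N_add hf0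
  have hgabs : ∀ x, ‖g x‖ ≤ ρ * ‖x‖ := by
    intro x
    rw [Real.norm_eq_abs, abs_le]
    constructor
    · have := (hg (-x)).trans (hple (-x))
      rw [map_neg, norm_neg] at this
      linarith
    · exact (hg x).trans (hple x)
  refine ⟨g.mkContinuous ρ hgabs, LinearMap.mkContinuous_norm_le g hρ hgabs, ?_⟩
  intro i hi
  have hii : p (-(aa i)) ≤ -(cc i) := by
    have hmem : ρ * ‖-(aa i) + ∑ j ∈ s, (fun j => if j = i then (1:ℝ) else 0) j • aa j‖
        - ∑ j ∈ s, (fun j => if j = i then (1:ℝ) else 0) j * cc j ∈ SS (-(aa i)) :=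
      ⟨_, fun j _ => by by_cases h : j = i <;> simp [h], rfl⟩
    have e1 : ∑ j ∈ s, (fun j => if j = i then (1:ℝ) else 0) j • aa j = aa i := by
      have : ∀ j ∈ s, (fun j => if j = i then (1:ℝ) else 0) j • aa j
          = if j = i then aa j else 0 := by
        intro j _
        by_cases h : j = i <;> simp [h]
      rw [Finset.sum_congr rfl this, Finset.sum_ite_eq' s i aa, if_pos hi]
    have e2 : ∑ j ∈ s, (fun j => if j = i then (1:ℝ) else 0) j * cc j = cc i := by
      have : ∀ j ∈ s, (fun j => if j = i then (1:ℝ) else 0) j * cc j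
          = if j = i then cc j else 0 := by
        intro j _
        by_cases h : j = i <;> simp [h]
      rw [Finset.sum_congr rfl this, Finset.sum_ite_eq' s i cc, if_pos hi]
    rw [e1, e2, neg_add_cancel, norm_zero, mul_zero, zero_sub] at hmem
    exact csInf_le (hbdd _) hmem
  have := (hg (-(aa i))).trans hii
  rw [map_neg] at this
  have : cc i ≤ g (aa i) := by linarith
  simpa using this


lemma exists_related_of_combos {B : Set (X × (X →L[ℝ] ℝ))} (y : X) (ρ : ℝ) (hρ : 0 ≤ ρ)
    (H : ∀ (u : Finset B) (lam : B → ℝ), (∀ q ∈ u, 0 ≤ lam q) → (∑ q ∈ u, lam q) = 1 →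
      ∑ q ∈ u, lam q * ((q : X × (X →L[ℝ] ℝ)).2 (y - (q : X × (X →L[ℝ] ℝ)).1)) ≤
        ρ * ‖∑ q ∈ u, lam q • (y - (q : X × (X →L[ℝ] ℝ)).1)‖) :
    ∃ η : X →L[ℝ] ℝ, ‖η‖ ≤ ρ ∧ ∀ q ∈ B, 0 ≤ (η - q.2) (y - q.1) := by
  set K : Set (WeakDual ℝ X) := WeakDual.toStrongDual ⁻¹' Metric.closedBall 0 ρ with hK
  have hKc : IsCompact K := WeakDual.isCompact_closedBall (0 : StrongDual ℝ X) ρ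
  set t : B → Set (WeakDual ℝ X) :=
    fun q => {ξ | (q : X × (X →L[ℝ] ℝ)).2 (y - (q : X × (X →L[ℝ] ℝ)).1) ≤
      ξ (y - (q : X × (X →L[ℝ] ℝ)).1)} with ht
  have htc : ∀ q, IsClosed (t q) :=
    fun q => isClosed_le continuous_const (WeakDual.eval_continuous _)
  have hfin : ∀ u : Finset B, (K ∩ ⋂ q ∈ u, t q).Nonempty := by
    intro u
    obtain ⟨η, hηn, hηs⟩ := farkas_ball u
      (fun q => y - (q : X × (X →L[ℝ] ℝ)).1)
      (fun q => (q : X × (X →L[ℝ] ℝ)).2 (y - (q : X × (X →L[ℝ] ℝ)).1)) ρ hρ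
      (fun lam h1 h2 => H u lam h1 h2)
    refine ⟨StrongDual.toWeakDual η, ?_, ?_⟩
    · simp only [hK, Set.mem_preimage, Metric.mem_closedBall]
      simpa [dist_eq_norm] using hηn
    · simp only [Set.mem_iInter]
      intro q hq
      exact hηs q hq
  obtain ⟨ξ, hξK, hξt⟩ := hKc.inter_iInter_nonempty t htc hfin
  refine ⟨WeakDual.toStrongDual ξ, ?_, ?_⟩
  · have := hξK
    simp only [hK, Set.mem_preimage, Metric.mem_closedBall, dist_eq_norm, sub_zero] at this
    simpa using this
  · intro q hq
    simp only [Set.mem_iInter] at hξt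
    have := hξt ⟨q, hq⟩
    simp only [ht, Set.mem_setOf_eq] at this
    have h2 : (WeakDual.toStrongDual ξ) (y - q.1) = ξ (y - q.1) := rfl
    rw [ContinuousLinearMap.sub_apply]
    rw [h2]
    linarith


set_option maxHeartbeats 1000000 in
lemma cluster_mem_dom {B : Set (X × (X →L[ℝ] ℝ))} (hB : IsMaxMonotoneOp B) {ybar : X} {K : ℝ}
    (seq : ℕ → X × (X →L[ℝ] ℝ)) (hmem : ∀ n, seq n ∈ B)
    (hconv : Tendsto (fun n => (seq n).1) atTop (𝓝 ybar))
    (hbdd : ∀ n, ‖(seq n).2‖ ≤ K) : ybar ∈ opDom B := by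
  set ξ : ℕ → WeakDual ℝ X := fun n => StrongDual.toWeakDual (seq n).2 with hξ
  have hKc : IsCompact (WeakDual.toStrongDual ⁻¹' Metric.closedBall (0 : StrongDual ℝ X) K) :=
    WeakDual.isCompact_closedBall (0 : StrongDual ℝ X) K
  have hmap : Filter.map ξ atTop ≤ 𝓟 (WeakDual.toStrongDual ⁻¹' Metric.closedBall 0 K) := by
    rw [Filter.le_principal_iff]
    refine Filter.mem_map.2 (Filter.Eventually.mono (Filter.eventually_true _) (fun n _ => ?_))
    simp only [Set.mem_preimage, Metric.mem_closedBall, dist_eq_norm, sub_zero]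
    exact hbdd n
  obtain ⟨b, -, hb⟩ := hKc.exists_mapClusterPt hmap
  set bstar : X →L[ℝ] ℝ := WeakDual.toStrongDual b with hbstar
  have hrelb : MonotonicallyRelated B (ybar, bstar) := by
    intro q hq
    simp only
    rw [ContinuousLinearMap.sub_apply]
    set α : ℝ := bstar (ybar - q.1) - q.2 (ybar - q.1) with hα
    show 0 ≤ α
    by_contra hneg
    push_neg at hneg
    set φ : ℕ → ℝ := fun n => ξ n (ybar - q.1) - q.2 (ybar - q.1) with hφ
    have hclφ : MapClusterPt α atTop φ := by
      have hcont : ContinuousAt (fun ζ : WeakDual ℝ X => ζ (ybar - q.1) - q.2 (ybar - q.1)) b :=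
        ((WeakDual.eval_continuous (ybar - q.1)).sub continuous_const).continuousAt
      exact hb.continuousAt_comp hcont
    -- eventual lower bound
    have hev : ∀ᶠ n in atTop, α / 2 ≤ φ n := by
      have hKnn : 0 ≤ max K 0 := le_max_right _ _
      have htend : Tendsto (fun n => (max K 0 + ‖q.2‖) * ‖ybar - (seq n).1‖) atTop (𝓝 0) := by
        have h1 : Tendsto (fun n => ybar - (seq n).1) atTop (𝓝 0) := by
          have := hconv.const_sub ybar
          simpa using this
        have h2 : Tendsto (fun n => ‖ybar - (seq n).1‖) atTop (𝓝 0) := by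
          simpa using h1.norm
        have := h2.const_mul (max K 0 + ‖q.2‖)
        simpa using this
      have hev2 : ∀ᶠ n in atTop, (max K 0 + ‖q.2‖) * ‖ybar - (seq n).1‖ < -α/2 := by
        refine htend.eventually_lt_const ?_
        linarith
      refine hev2.mono (fun n hn => ?_)
      have hg : 0 ≤ ((seq n).2 - q.2) ((seq n).1 - q.1) := hB.1 (seq n) (hmem n) q hq
      rw [ContinuousLinearMap.sub_apply] at hg
      have hdiff : φ n - ((seq n).2 ((seq n).1 - q.1) - q.2 ((seq n).1 - q.1)) =
          (seq n).2 (ybar - (seq n).1) - q.2 (ybar - (seq n).1) := by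
        have e1 : ξ n (ybar - q.1) = (seq n).2 (ybar - q.1) := rfl
        simp only [hφ, e1]
        have e2 : (ybar - q.1) = (ybar - (seq n).1) + ((seq n).1 - q.1) := by abel
        rw [e2, map_add, map_add]
        ring
      have hb1 : |(seq n).2 (ybar - (seq n).1)| ≤ max K 0 * ‖ybar - (seq n).1‖ := by
        rw [← Real.norm_eq_abs]
        refine (ContinuousLinearMap.le_opNorm _ _).trans ?_
        have hx := norm_nonneg (ybar - (seq n).1)
        exact mul_le_mul_of_nonneg_right ((hbdd n).trans (le_max_left _ _)) hx
      have hb2 : |q.2 (ybar - (seq n).1)| ≤ ‖q.2‖ * ‖ybar - (seq n).1‖ := by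
        rw [← Real.norm_eq_abs]
        exact ContinuousLinearMap.le_opNorm _ _
      have habs1 := abs_le.1 hb1
      have habs2 := abs_le.1 hb2
      have hφn : α / 2 ≤ φ n := by
        have h1 := habs1.1
        have h2 := habs2.2
        have h3 : (K ⊔ 0 + ‖q.2‖) * ‖ybar - (seq n).1‖
            = (K ⊔ 0) * ‖ybar - (seq n).1‖ + ‖q.2‖ * ‖ybar - (seq n).1‖ := by ring
        rw [h3] at hn
        have hβ : ∃ β : ℝ, φ n = β := ⟨_, rfl⟩
        obtain ⟨β, hβ⟩ := hβ
        rw [hβ] at hdiff ⊢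
        have hγ : ∃ γ : ℝ, α = γ := ⟨_, rfl⟩
        obtain ⟨γ, hγ⟩ := hγ
        rw [hγ]
        rw [hγ] at hn
        linarith [hg, hdiff, h1, h2, hn]
      exact hφn
    -- frequently near α
    have hfreq : ∃ᶠ n in atTop, φ n < α / 2 := by
      have := (mapClusterPt_iff_frequently.1 hclφ) (Set.Iio (α/2)) (Iio_mem_nhds (by linarith))
      exact this.mono (fun n hn => hn)
    obtain ⟨n, hn1, hn2⟩ := (hfreq.and_eventually hev).exists
    linarith
  have := mem_of_monRel hB hrelb
  exact ⟨bstar, this⟩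


set_option maxHeartbeats 1000000 in
lemma locBnd [CompleteSpace X] {B : Set (X × (X →L[ℝ] ℝ))} (hB : IsMonotoneOp B) {x₀ : X}
    (hx₀ : x₀ ∈ interior (opDom B)) :
    ∃ σ C : ℝ, 0 < σ ∧ 0 ≤ C ∧ Metric.closedBall x₀ σ ⊆ opDom B ∧
      ∀ p ∈ B, ‖p.1 - x₀‖ ≤ σ → ‖p.2‖ ≤ C := by
  -- a closed ball inside the domain
  obtain ⟨ε', hε', hball'⟩ := Metric.mem_nhds_iff.1 (mem_interior_iff_mem_nhds.1 hx₀)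
  obtain ⟨ε, hε⟩ : ∃ ε : ℝ, ε = ε' / 2 := ⟨_, rfl⟩
  have hεpos : 0 < ε := by rw [hε]; positivity
  have hball : Metric.closedBall x₀ ε ⊆ opDom B := by
    refine subset_trans ?_ hball'
    intro x hx
    rw [Metric.mem_closedBall] at hx
    rw [Metric.mem_ball]
    have : ε < ε' := by rw [hε]; linarith
    linarith
  -- the closed convex sets
  set F : ℕ → Set X := fun n => {x | ‖x - x₀‖ ≤ ε ∧
    ∀ p ∈ B, ‖p.1 - x₀‖ ≤ ε → p.2 (x - p.1) ≤ (n : ℝ)} with hF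
  have hFclosed : ∀ n, IsClosed (F n) := by
    intro n
    have h1 : IsClosed {x : X | ‖x - x₀‖ ≤ ε} :=
      isClosed_le (continuous_norm.comp (continuous_id.sub continuous_const)) continuous_const
    have h2 : IsClosed {x : X | ∀ p ∈ B, ‖p.1 - x₀‖ ≤ ε → p.2 (x - p.1) ≤ (n : ℝ)} := by
      rw [show {x : X | ∀ p ∈ B, ‖p.1 - x₀‖ ≤ ε → p.2 (x - p.1) ≤ (n : ℝ)}
        = ⋂ p ∈ B, ⋂ (_ : ‖(p : X × (X →L[ℝ] ℝ)).1 - x₀‖ ≤ ε), {x | p.2 (x - p.1) ≤ (n : ℝ)} by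
          ext x; simp [Set.mem_iInter]]
      refine isClosed_biInter (fun p hp => ?_)
      refine isClosed_iInter (fun hpb => ?_)
      exact isClosed_le (p.2.continuous.comp (continuous_id.sub continuous_const)) continuous_const
    exact h1.inter h2
  have hFconvex : ∀ n, Convex ℝ (F n) := by
    intro n
    have h1 : Convex ℝ {x : X | ‖x - x₀‖ ≤ ε} := by
      have := convex_closedBall x₀ ε
      convert this using 1
      ext x
      simp [Metric.mem_closedBall, dist_eq_norm]
    have h2 : Convex ℝ {x : X | ∀ p ∈ B, ‖p.1 - x₀‖ ≤ ε → p.2 (x - p.1) ≤ (n : ℝ)} := by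
      intro a ha b hb s u hs hu hsu
      intro p hp hpe
      have h3 := ha p hp hpe
      have h4 := hb p hp hpe
      have hcomb : s • p.1 + u • p.1 = p.1 := by rw [← add_smul, hsu, one_smul]
      have e1 : (s • a + u • b) - p.1 = s • (a - p.1) + u • (b - p.1) := by
        rw [smul_sub, smul_sub]
        nth_rewrite 1 [← hcomb]
        abel
      rw [e1, map_add, map_smul, map_smul]
      calc s • p.2 (a - p.1) + u • p.2 (b - p.1) ≤ s • (n : ℝ) + u • (n : ℝ) := by
            have := add_le_add (smul_le_smul_of_nonneg_left h3 hs)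
              (smul_le_smul_of_nonneg_left h4 hu)
            exact this
      _ = (n : ℝ) := by rw [smul_eq_mul, smul_eq_mul, ← add_mul, hsu, one_mul]
    exact Convex.inter h1 h2
  -- the members of the closed ball are covered
  have hcover : ∀ x : X, ‖x - x₀‖ ≤ ε → ∃ n : ℕ, x ∈ F n := by
    intro x hx
    have hxdom : x ∈ opDom B := hball (by rwa [Metric.mem_closedBall, dist_eq_norm])
    obtain ⟨xs, hxs⟩ := hxdom
    obtain ⟨n, hn⟩ := exists_nat_ge (‖xs‖ * (2 * ε))
    refine ⟨n, hx, fun p hp hpe => ?_⟩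
    have hmono := hB (x, xs) hxs p hp
    rw [ContinuousLinearMap.sub_apply] at hmono
    have h1 : p.2 (x - p.1) ≤ xs (x - p.1) := by
      simp only at hmono; linarith
    have h2 : xs (x - p.1) ≤ ‖xs‖ * (2 * ε) := by
      have hop := ContinuousLinearMap.le_opNorm xs (x - p.1)
      have h3 : ‖x - p.1‖ ≤ 2 * ε := by
        have e2 : x - p.1 = (x - x₀) - (p.1 - x₀) := by abel
        rw [e2]
        calc ‖(x - x₀) - (p.1 - x₀)‖ ≤ ‖x - x₀‖ + ‖p.1 - x₀‖ := norm_sub_le _ _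
        _ ≤ 2 * ε := by linarith
      have h4 : xs (x - p.1) ≤ ‖xs (x - p.1)‖ := le_abs_self _
      calc xs (x - p.1) ≤ ‖xs (x - p.1)‖ := h4
      _ ≤ ‖xs‖ * ‖x - p.1‖ := hop
      _ ≤ ‖xs‖ * (2 * ε) := mul_le_mul_of_nonneg_left h3 (norm_nonneg _)
    linarith
  -- Baire category
  set H : ℕ → Set X := fun n => F n ∪ {x | ε ≤ ‖x - x₀‖} with hH
  have hHclosed : ∀ n, IsClosed (H n) := by
    intro n
    exact (hFclosed n).union
      (isClosed_le continuous_const (continuous_norm.comp (continuous_id.sub continuous_const)))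
  have hHcover : (⋃ n, H n) = Set.univ := by
    ext x
    simp only [Set.mem_iUnion, Set.mem_univ, iff_true]
    by_cases hx : ‖x - x₀‖ ≤ ε
    · obtain ⟨n, hn⟩ := hcover x hx
      exact ⟨n, Or.inl hn⟩
    · exact ⟨0, Or.inr (le_of_not_ge hx)⟩
  have hdense := dense_iUnion_interior_of_closed hHclosed hHcover
  have hballne : (Metric.ball x₀ (ε/2)).Nonempty := Metric.nonempty_ball.2 (by linarith)
  obtain ⟨pc, hpc1, hpc2⟩ := hdense.exists_mem_open Metric.isOpen_ball hballne
  rw [Set.mem_iUnion] at hpc1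
  obtain ⟨m, hm⟩ := hpc1
  rw [Metric.mem_ball, dist_eq_norm] at hpc2
  obtain ⟨ρ₀, hρ₀pos, hρ₀⟩ := Metric.isOpen_iff.1 isOpen_interior pc hm
  obtain ⟨ρ₁, hρ₁⟩ : ∃ ρ : ℝ, ρ = min ρ₀ (ε / 2) := ⟨_, rfl⟩
  have hρ₁pos : 0 < ρ₁ := by rw [hρ₁]; exact lt_min hρ₀pos (by linarith)
  have hballF : Metric.ball pc ρ₁ ⊆ F m := by
    intro x hx
    rw [Metric.mem_ball, dist_eq_norm] at hx
    have hxH : x ∈ H m := interior_subset (hρ₀ (by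
      rw [Metric.mem_ball, dist_eq_norm]
      exact hx.trans_le (by rw [hρ₁] at hx ⊢; exact min_le_left _ _)))
    rcases hxH with h | h
    · exact h
    · exfalso
      have h1 : ‖x - x₀‖ ≤ ‖x - pc‖ + ‖pc - x₀‖ := by
        have e3 : x - x₀ = (x - pc) + (pc - x₀) := by abel
        rw [e3]; exact norm_add_le _ _
      have h2 : ‖x - pc‖ < ε / 2 := hx.trans_le (by rw [hρ₁]; exact min_le_right _ _)
      have h3 : ε ≤ ‖x - x₀‖ := h
      linarith
  -- reflect pc to the other side
  obtain ⟨x₃, hx₃⟩ : ∃ v : X, v = x₀ + (x₀ - pc) := ⟨_, rfl⟩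
  have hx₃ball : ‖x₃ - x₀‖ ≤ ε := by
    have e4 : x₃ - x₀ = x₀ - pc := by rw [hx₃]; abel
    rw [e4, norm_sub_rev]
    linarith
  obtain ⟨m', hm'⟩ := hcover x₃ hx₃ball
  obtain ⟨N, hNdef⟩ : ∃ N : ℝ, N = max (m : ℝ) (m' : ℝ) := ⟨_, rfl⟩
  have hNnn : 0 ≤ N := by rw [hNdef]; exact le_trans (Nat.cast_nonneg m) (le_max_left _ _)
  have hN1 : (m' : ℝ) ≤ N := by rw [hNdef]; exact le_max_right _ _
  have hN2 : (m : ℝ) ≤ N := by rw [hNdef]; exact le_max_left _ _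
  -- all constraints bounded by N near x₀
  have hmid : ∀ h : X, ‖h‖ < ρ₁ / 2 → ∀ p ∈ B, ‖p.1 - x₀‖ ≤ ε →
      p.2 (x₀ + h - p.1) ≤ N := by
    intro h hh p hp hpe
    have hmem2 : pc + (2 : ℝ) • h ∈ Metric.ball pc ρ₁ := by
      rw [Metric.mem_ball, dist_eq_norm]
      have e5 : pc + (2:ℝ) • h - pc = (2:ℝ) • h := by abel
      rw [e5, norm_smul]
      simp only [Real.norm_ofNat]
      linarith
    have hF2 := hballF hmem2
    have hc1 := hF2.2 p hp hpe
    have hc2 := hm'.2 p hp hpe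
    have e1 : x₀ + h - p.1 = ((1:ℝ)/2) • (x₃ - p.1) + ((1:ℝ)/2) • ((pc + (2:ℝ) • h) - p.1) := by
      rw [hx₃]
      match_scalars <;> norm_num
    rw [e1, map_add, map_smul, map_smul]
    have := add_le_add (smul_le_smul_of_nonneg_left hc2 (by norm_num : (0:ℝ) ≤ 1/2))
      (smul_le_smul_of_nonneg_left hc1 (by norm_num : (0:ℝ) ≤ 1/2))
    refine le_trans this ?_
    simp only [smul_eq_mul]
    linarith
  -- conclusion
  refine ⟨min ε (ρ₁ / 8), (N / (ρ₁ / 4)), lt_min hεpos (by linarith),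
    div_nonneg hNnn (by linarith), ?_, ?_⟩
  · exact fun x hx => hball (Metric.closedBall_subset_closedBall (min_le_left _ _) hx)
  · intro p hp hpn
    have hpe : ‖p.1 - x₀‖ ≤ ε := hpn.trans (min_le_left _ _)
    have hpρ : ‖p.1 - x₀‖ ≤ ρ₁ / 8 := hpn.trans (min_le_right _ _)
    have key : ∀ v : X, ‖v‖ ≤ 1 → p.2 v ≤ N / (ρ₁ / 4) := by
      intro v hv
      have hh : ‖(p.1 - x₀) + (ρ₁ / 4) • v‖ < ρ₁ / 2 := by
        calc ‖(p.1 - x₀) + (ρ₁ / 4) • v‖ ≤ ‖p.1 - x₀‖ + ‖(ρ₁ / 4) • v‖ := norm_add_le _ _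
        _ ≤ ρ₁ / 8 + (ρ₁ / 4) * 1 := by
              refine add_le_add hpρ ?_
              rw [norm_smul, Real.norm_eq_abs, abs_of_pos (by linarith)]
              exact mul_le_mul_of_nonneg_left hv (by linarith)
        _ < ρ₁ / 2 := by linarith
      have hval := hmid _ hh p hp hpe
      have e1 : x₀ + ((p.1 - x₀) + (ρ₁ / 4) • v) - p.1 = (ρ₁ / 4) • v := by abel
      rw [e1, map_smul, smul_eq_mul] at hval
      rw [le_div_iff₀ (by linarith : (0:ℝ) < ρ₁ / 4)]
      linarith
    exact dual_norm_le_of_forall_le key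


set_option maxHeartbeats 2000000 in
lemma segment_mem_dom {B : Set (X × (X →L[ℝ] ℝ))} (hB : IsMaxMonotoneOp B) {c : X} {σ C : ℝ}
    (hσ : 0 < σ) (hC : 0 ≤ C)
    (hball : ∀ v : X, ‖v‖ ≤ σ → c + v ∈ opDom B)
    (hbdd : ∀ p ∈ B, ‖p.1 - c‖ ≤ σ → ‖p.2‖ ≤ C)
    {w : X} {ws : X →L[ℝ] ℝ} (hw : (w, ws) ∈ B) {θ : ℝ} (hθ0 : 0 < θ) (hθ1 : θ < 1) :
    c + θ • (w - c) ∈ opDom B := by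
  have hθ1' : (0:ℝ) ≤ 1 - θ := by linarith
  obtain ⟨W, hW⟩ : ∃ W : ℝ, W = ‖w - c‖ := ⟨_, rfl⟩
  have hWnn : 0 ≤ W := hW ▸ norm_nonneg _
  obtain ⟨ns, hns⟩ : ∃ ns : ℝ, ns = ‖ws‖ := ⟨_, rfl⟩
  have hnsnn : 0 ≤ ns := hns ▸ norm_nonneg _
  obtain ⟨a, hadef⟩ : ∃ a : ℝ, a = (1 - θ) * σ := ⟨_, rfl⟩
  have ha : 0 < a := by rw [hadef]; nlinarith
  obtain ⟨K₀, hK₀def⟩ : ∃ k : ℝ, k = (1 - θ) * C * (σ + θ * W) + θ * (1 - θ) * ns * W :=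
    ⟨_, rfl⟩
  have hK₀ : 0 ≤ K₀ := by
    rw [hK₀def]
    have h1 : 0 ≤ (1 - θ) * C * (σ + θ * W) := by
      refine mul_nonneg (mul_nonneg hθ1' hC) ?_
      nlinarith
    have h2 : 0 ≤ θ * (1 - θ) * ns * W :=
      mul_nonneg (mul_nonneg (mul_nonneg hθ0.le hθ1') hnsnn) hWnn
    linarith
  obtain ⟨K₁, hK₁def⟩ : ∃ k : ℝ, k = (1 - θ) * C + θ * ns := ⟨_, rfl⟩
  have hK₁ : 0 ≤ K₁ := by
    rw [hK₁def]
    nlinarith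
  obtain ⟨ρ, hρdef⟩ : ∃ r : ℝ, r = K₀ / a + K₁ := ⟨_, rfl⟩
  have hρ : 0 ≤ ρ := by
    rw [hρdef]
    have := div_nonneg hK₀ ha.le
    linarith
  have hρa : ρ * a = K₀ + K₁ * a := by
    rw [hρdef]
    field_simp
  have hρK₁ : K₁ ≤ ρ := by
    rw [hρdef]
    have := div_nonneg hK₀ ha.le
    linarith
  set y : X := c + θ • (w - c) with hy
  have Hcombo : ∀ (u : Finset B) (lam : B → ℝ), (∀ q ∈ u, 0 ≤ lam q) → (∑ q ∈ u, lam q) = 1 →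
      ∑ q ∈ u, lam q * ((q : X × (X →L[ℝ] ℝ)).2 (y - (q : X × (X →L[ℝ] ℝ)).1)) ≤
        ρ * ‖∑ q ∈ u, lam q • (y - (q : X × (X →L[ℝ] ℝ)).1)‖ := by
    intro u lam hlam hsum
    set A : ℝ := ∑ q ∈ u, lam q * ((q : X × (X →L[ℝ] ℝ)).2 (y - (q : X × (X →L[ℝ] ℝ)).1))
      with hA
    set Δ : X := ∑ q ∈ u, lam q • (y - (q : X × (X →L[ℝ] ℝ)).1) with hΔ
    set T : X →L[ℝ] ℝ := ∑ q ∈ u, lam q • (q : X × (X →L[ℝ] ℝ)).2 with hT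
    -- double sum expansions
    have hTΔ : T Δ = ∑ p ∈ u, ∑ q ∈ u, lam p * lam q *
        ((p : X × (X →L[ℝ] ℝ)).2 (y - (q : X × (X →L[ℝ] ℝ)).1)) := by
      rw [hT, ContinuousLinearMap.sum_apply]
      refine Finset.sum_congr rfl fun p _ => ?_
      rw [ContinuousLinearMap.smul_apply, smul_eq_mul, hΔ, map_sum, Finset.mul_sum]
      refine Finset.sum_congr rfl fun q _ => ?_
      rw [map_smul, smul_eq_mul]
      ring
    have hAd : ∑ p ∈ u, ∑ q ∈ u, lam p * lam q *
        ((q : X × (X →L[ℝ] ℝ)).2 (y - (q : X × (X →L[ℝ] ℝ)).1)) = A := by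
      have h1 : ∀ p ∈ u, ∑ q ∈ u, lam p * lam q *
          ((q : X × (X →L[ℝ] ℝ)).2 (y - (q : X × (X →L[ℝ] ℝ)).1)) = lam p * A := by
        intro p _
        rw [hA, Finset.mul_sum]
        exact Finset.sum_congr rfl fun q _ => by ring
      rw [Finset.sum_congr rfl h1, ← Finset.sum_mul, hsum, one_mul]
    have hS3 : ∑ p ∈ u, ∑ q ∈ u, lam p * lam q *
        ((p : X × (X →L[ℝ] ℝ)).2 (y - (p : X × (X →L[ℝ] ℝ)).1)) = A := by
      have h1 : ∀ p ∈ u, ∑ q ∈ u, lam p * lam q *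
          ((p : X × (X →L[ℝ] ℝ)).2 (y - (p : X × (X →L[ℝ] ℝ)).1))
          = lam p * ((p : X × (X →L[ℝ] ℝ)).2 (y - (p : X × (X →L[ℝ] ℝ)).1)) := by
        intro p _
        have h2 : ∀ q ∈ u, lam p * lam q *
            ((p : X × (X →L[ℝ] ℝ)).2 (y - (p : X × (X →L[ℝ] ℝ)).1))
            = lam q * (lam p * ((p : X × (X →L[ℝ] ℝ)).2 (y - (p : X × (X →L[ℝ] ℝ)).1))) :=
          fun q _ => by ring
        rw [Finset.sum_congr rfl h2, ← Finset.sum_mul, hsum, one_mul]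
      rw [Finset.sum_congr rfl h1, hA]
    have hS4 : ∑ p ∈ u, ∑ q ∈ u, lam p * lam q *
        ((q : X × (X →L[ℝ] ℝ)).2 (y - (p : X × (X →L[ℝ] ℝ)).1)) = T Δ := by
      rw [Finset.sum_comm, hTΔ]
      refine Finset.sum_congr rfl fun p _ => Finset.sum_congr rfl fun q _ => by ring
    -- monotonicity double sum
    have hmono2 : (0:ℝ) ≤ ∑ p ∈ u, ∑ q ∈ u, lam p * lam q *
        (((p : X × (X →L[ℝ] ℝ)).2 - (q : X × (X →L[ℝ] ℝ)).2)
          ((p : X × (X →L[ℝ] ℝ)).1 - (q : X × (X →L[ℝ] ℝ)).1)) := by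
      refine Finset.sum_nonneg fun p hp => Finset.sum_nonneg fun q hq => ?_
      refine mul_nonneg (mul_nonneg (hlam p hp) (hlam q hq)) ?_
      exact hB.1 _ p.prop _ q.prop
    have hterm : ∀ p ∈ u, ∀ q ∈ u, lam p * lam q *
        (((p : X × (X →L[ℝ] ℝ)).2 - (q : X × (X →L[ℝ] ℝ)).2)
          ((p : X × (X →L[ℝ] ℝ)).1 - (q : X × (X →L[ℝ] ℝ)).1))
        = (lam p * lam q * ((p : X × (X →L[ℝ] ℝ)).2 (y - (q : X × (X →L[ℝ] ℝ)).1))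
            - lam p * lam q * ((q : X × (X →L[ℝ] ℝ)).2 (y - (q : X × (X →L[ℝ] ℝ)).1)))
          + (lam p * lam q * ((q : X × (X →L[ℝ] ℝ)).2 (y - (p : X × (X →L[ℝ] ℝ)).1))
            - lam p * lam q * ((p : X × (X →L[ℝ] ℝ)).2 (y - (p : X × (X →L[ℝ] ℝ)).1))) := by
      intro p _ q _
      rw [ContinuousLinearMap.sub_apply]
      simp only [map_sub]
      ring
    have hE2 : A ≤ T Δ := by
      have hsplit : ∑ p ∈ u, ∑ q ∈ u, lam p * lam q *
          (((p : X × (X →L[ℝ] ℝ)).2 - (q : X × (X →L[ℝ] ℝ)).2)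
            ((p : X × (X →L[ℝ] ℝ)).1 - (q : X × (X →L[ℝ] ℝ)).1))
          = (T Δ - A) + (T Δ - A) := by
        have h1 : ∀ p ∈ u, ∑ q ∈ u, lam p * lam q *
            (((p : X × (X →L[ℝ] ℝ)).2 - (q : X × (X →L[ℝ] ℝ)).2)
              ((p : X × (X →L[ℝ] ℝ)).1 - (q : X × (X →L[ℝ] ℝ)).1))
            = ((∑ q ∈ u, lam p * lam q * ((p : X × (X →L[ℝ] ℝ)).2 (y - (q : X × (X →L[ℝ] ℝ)).1)))
              - (∑ q ∈ u, lam p * lam q * ((q : X × (X →L[ℝ] ℝ)).2 (y - (q : X × (X →L[ℝ] ℝ)).1))))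
              + ((∑ q ∈ u, lam p * lam q * ((q : X × (X →L[ℝ] ℝ)).2 (y - (p : X × (X →L[ℝ] ℝ)).1)))
              - (∑ q ∈ u, lam p * lam q * ((p : X × (X →L[ℝ] ℝ)).2 (y - (p : X × (X →L[ℝ] ℝ)).1)))) := by
          intro p hp
          rw [← Finset.sum_sub_distrib, ← Finset.sum_sub_distrib, ← Finset.sum_add_distrib]
          exact Finset.sum_congr rfl fun q hq => hterm p hp q hq
        rw [Finset.sum_congr rfl h1]
        rw [Finset.sum_add_distrib, Finset.sum_sub_distrib, Finset.sum_sub_distrib]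
        rw [← hTΔ, hAd, hS3, hS4]
      rw [hsplit] at hmono2
      linarith
    -- (E1)
    have hE1 : ∀ v : X, ‖v‖ ≤ 1 → a * (T v) ≤ K₀ + K₁ * ‖Δ‖ - A := by
      intro v hv
      have hσv : ‖σ • v‖ ≤ σ := by
        rw [norm_smul, Real.norm_eq_abs, abs_of_pos hσ]
        nlinarith [norm_nonneg v]
      obtain ⟨cs, hcs⟩ := hball (σ • v) hσv
      have hcsb : ‖cs‖ ≤ C := by
        refine hbdd (c + σ • v, cs) hcs ?_
        simp only
        rw [add_sub_cancel_left]
        exact hσv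
      have hpt : ∀ q ∈ u, lam q * ((q : X × (X →L[ℝ] ℝ)).2 (y - (q : X × (X →L[ℝ] ℝ)).1)) ≤
          (1-θ) * (lam q * (cs ((c + σ • v) - (q : X × (X →L[ℝ] ℝ)).1)))
          - (1-θ) * σ * (lam q * ((q : X × (X →L[ℝ] ℝ)).2 v))
          + θ * (lam q * (ws (w - (q : X × (X →L[ℝ] ℝ)).1))) := by
        intro q hq
        have hm1 := hB.1 (q : X × (X →L[ℝ] ℝ)) q.prop (c + σ • v, cs) hcs
        rw [ContinuousLinearMap.sub_apply] at hm1
        have hm1' : (q : X × (X →L[ℝ] ℝ)).2 ((c + σ • v) - (q : X × (X →L[ℝ] ℝ)).1)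
            ≤ cs ((c + σ • v) - (q : X × (X →L[ℝ] ℝ)).1) := by
          have e2 : (c + σ • v) - (q : X × (X →L[ℝ] ℝ)).1
              = -((q : X × (X →L[ℝ] ℝ)).1 - (c + σ • v, cs).1) := by simp only; abel
          rw [e2, map_neg, map_neg]
          simp only at hm1
          linarith
        have hm2 := hB.1 (q : X × (X →L[ℝ] ℝ)) q.prop (w, ws) hw
        rw [ContinuousLinearMap.sub_apply] at hm2
        have hm2' : (q : X × (X →L[ℝ] ℝ)).2 (w - (q : X × (X →L[ℝ] ℝ)).1)
            ≤ ws (w - (q : X × (X →L[ℝ] ℝ)).1) := by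
          have e2 : w - (q : X × (X →L[ℝ] ℝ)).1 = -((q : X × (X →L[ℝ] ℝ)).1 - (w, ws).1) := by
            simp only; abel
          rw [e2, map_neg, map_neg]
          simp only at hm2
          linarith
        have edec : y - (q : X × (X →L[ℝ] ℝ)).1
            = (1-θ) • ((c + σ • v) - (q : X × (X →L[ℝ] ℝ)).1) - ((1-θ) * σ) • v
              + θ • (w - (q : X × (X →L[ℝ] ℝ)).1) := by
          rw [hy]
          match_scalars <;> ring
        have expand : (q : X × (X →L[ℝ] ℝ)).2 (y - (q : X × (X →L[ℝ] ℝ)).1)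
            = (1-θ) * ((q : X × (X →L[ℝ] ℝ)).2 ((c + σ • v) - (q : X × (X →L[ℝ] ℝ)).1))
              - (1-θ) * σ * ((q : X × (X →L[ℝ] ℝ)).2 v)
              + θ * ((q : X × (X →L[ℝ] ℝ)).2 (w - (q : X × (X →L[ℝ] ℝ)).1)) := by
          rw [edec, map_add, map_sub, map_smul, map_smul, map_smul]
          simp only [smul_eq_mul]
          try ring
        have hcoef1 : (1-θ) * ((q : X × (X →L[ℝ] ℝ)).2 ((c + σ • v) - (q : X × (X →L[ℝ] ℝ)).1))
            ≤ (1-θ) * (cs ((c + σ • v) - (q : X × (X →L[ℝ] ℝ)).1)) :=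
          mul_le_mul_of_nonneg_left hm1' hθ1'
        have hcoef2 : θ * ((q : X × (X →L[ℝ] ℝ)).2 (w - (q : X × (X →L[ℝ] ℝ)).1))
            ≤ θ * (ws (w - (q : X × (X →L[ℝ] ℝ)).1)) :=
          mul_le_mul_of_nonneg_left hm2' hθ0.le
        have hq1 : (q : X × (X →L[ℝ] ℝ)).2 (y - (q : X × (X →L[ℝ] ℝ)).1)
            ≤ (1-θ) * (cs ((c + σ • v) - (q : X × (X →L[ℝ] ℝ)).1))
              - (1-θ) * σ * ((q : X × (X →L[ℝ] ℝ)).2 v)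
              + θ * (ws (w - (q : X × (X →L[ℝ] ℝ)).1)) := by
          rw [expand]
          linarith
        have := mul_le_mul_of_nonneg_left hq1 (hlam q hq)
        calc lam q * ((q : X × (X →L[ℝ] ℝ)).2 (y - (q : X × (X →L[ℝ] ℝ)).1)) ≤
            lam q * ((1-θ) * (cs ((c + σ • v) - (q : X × (X →L[ℝ] ℝ)).1))
              - (1-θ) * σ * ((q : X × (X →L[ℝ] ℝ)).2 v)
              + θ * (ws (w - (q : X × (X →L[ℝ] ℝ)).1))) := this
        _ = (1-θ) * (lam q * (cs ((c + σ • v) - (q : X × (X →L[ℝ] ℝ)).1)))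
              - (1-θ) * σ * (lam q * ((q : X × (X →L[ℝ] ℝ)).2 v))
              + θ * (lam q * (ws (w - (q : X × (X →L[ℝ] ℝ)).1))) := by ring
      have hsumle := Finset.sum_le_sum hpt
      rw [← hA] at hsumle
      -- rewrite the right hand side sum
      have hsplit2 : ∑ q ∈ u, ((1-θ) * (lam q * (cs ((c + σ • v) - (q : X × (X →L[ℝ] ℝ)).1)))
          - (1-θ) * σ * (lam q * ((q : X × (X →L[ℝ] ℝ)).2 v))
          + θ * (lam q * (ws (w - (q : X × (X →L[ℝ] ℝ)).1))))
          = (1-θ) * (cs (((c + σ • v) - y) + Δ)) - (1-θ) * σ * (T v)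
            + θ * (ws ((w - y) + Δ)) := by
        rw [Finset.sum_add_distrib, Finset.sum_sub_distrib]
        congr 1
        · congr 1
          · rw [← Finset.mul_sum]
            congr 1
            have e3 : ((c + σ • v) - y) + Δ = ∑ q ∈ u, lam q • ((c + σ • v) - (q : X × (X →L[ℝ] ℝ)).1) := by
              rw [hΔ]
              have e4 : ∀ q ∈ u, lam q • ((c + σ • v) - (q : X × (X →L[ℝ] ℝ)).1)
                  = lam q • ((c + σ • v) - y) + lam q • (y - (q : X × (X →L[ℝ] ℝ)).1) := by
                intro q _
                rw [← smul_add]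
                congr 1
                abel
              rw [Finset.sum_congr rfl e4, Finset.sum_add_distrib, ← Finset.sum_smul, hsum,
                one_smul]
            rw [e3, map_sum]
            exact Finset.sum_congr rfl fun q _ => by rw [map_smul, smul_eq_mul]
          · rw [← Finset.mul_sum]
            congr 1
            rw [hT, ContinuousLinearMap.sum_apply]
            exact Finset.sum_congr rfl fun q _ => by
              rw [ContinuousLinearMap.smul_apply, smul_eq_mul]
        · rw [← Finset.mul_sum]
          congr 1
          have e3 : (w - y) + Δ = ∑ q ∈ u, lam q • (w - (q : X × (X →L[ℝ] ℝ)).1) := by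
            rw [hΔ]
            have e4 : ∀ q ∈ u, lam q • (w - (q : X × (X →L[ℝ] ℝ)).1)
                = lam q • (w - y) + lam q • (y - (q : X × (X →L[ℝ] ℝ)).1) := by
              intro q _
              rw [← smul_add]
              congr 1
              abel
            rw [Finset.sum_congr rfl e4, Finset.sum_add_distrib, ← Finset.sum_smul, hsum,
              one_smul]
          rw [e3, map_sum]
          exact Finset.sum_congr rfl fun q _ => by rw [map_smul, smul_eq_mul]
      rw [hsplit2] at hsumle
      -- bound the two evaluation terms
      have hb1 : cs (((c + σ • v) - y) + Δ) ≤ C * ((σ + θ * W) + ‖Δ‖) := by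
        have h1 : cs (((c + σ • v) - y) + Δ) ≤ ‖cs‖ * ‖((c + σ • v) - y) + Δ‖ := by
          have := ContinuousLinearMap.le_opNorm cs (((c + σ • v) - y) + Δ)
          have h2 := le_abs_self (cs (((c + σ • v) - y) + Δ))
          rw [← Real.norm_eq_abs] at h2
          linarith
        have h3 : ‖((c + σ • v) - y) + Δ‖ ≤ (σ + θ * W) + ‖Δ‖ := by
          refine (norm_add_le _ _).trans ?_
          have e5 : (c + σ • v) - y = σ • v - θ • (w - c) := by rw [hy]; abel
          have h4 : ‖(c + σ • v) - y‖ ≤ σ + θ * W := by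
            rw [e5]
            refine (norm_sub_le _ _).trans ?_
            have h5 : ‖σ • v‖ ≤ σ := hσv
            have h6 : ‖θ • (w - c)‖ = θ * W := by
              rw [norm_smul, Real.norm_eq_abs, abs_of_pos hθ0, hW]
            linarith
          linarith
        calc cs (((c + σ • v) - y) + Δ) ≤ ‖cs‖ * ‖((c + σ • v) - y) + Δ‖ := h1
        _ ≤ C * ((σ + θ * W) + ‖Δ‖) := by
            refine mul_le_mul hcsb h3 (norm_nonneg _) hC
      have hb2 : ws ((w - y) + Δ) ≤ ns * ((1 - θ) * W + ‖Δ‖) := by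
        have h1 : ws ((w - y) + Δ) ≤ ns * ‖(w - y) + Δ‖ := by
          have h0 := ContinuousLinearMap.le_opNorm ws ((w - y) + Δ)
          have h2 := le_abs_self (ws ((w - y) + Δ))
          rw [← Real.norm_eq_abs] at h2
          rw [hns]
          linarith
        have h3 : ‖(w - y) + Δ‖ ≤ (1 - θ) * W + ‖Δ‖ := by
          refine (norm_add_le _ _).trans ?_
          have e5 : w - y = (1 - θ) • (w - c) := by
            rw [hy]
            match_scalars <;> ring
          have h4 : ‖w - y‖ = (1 - θ) * W := by
            rw [e5, norm_smul, Real.norm_eq_abs, abs_of_nonneg hθ1', hW]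
          linarith
        calc ws ((w - y) + Δ) ≤ ns * ‖(w - y) + Δ‖ := h1
        _ ≤ ns * ((1 - θ) * W + ‖Δ‖) := mul_le_mul_of_nonneg_left h3 hnsnn
      -- put it together
      have hfinal : A ≤ K₀ + K₁ * ‖Δ‖ - a * (T v) := by
        have h1 : (1-θ) * (cs (((c + σ • v) - y) + Δ)) ≤ (1-θ) * (C * ((σ + θ * W) + ‖Δ‖)) :=
          mul_le_mul_of_nonneg_left hb1 hθ1'
        have h2 : θ * (ws ((w - y) + Δ)) ≤ θ * (ns * ((1 - θ) * W + ‖Δ‖)) :=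
          mul_le_mul_of_nonneg_left hb2 hθ0.le
        have h3 : A ≤ (1-θ) * (C * ((σ + θ * W) + ‖Δ‖)) - (1-θ) * σ * (T v)
            + θ * (ns * ((1 - θ) * W + ‖Δ‖)) := by linarith
        have e6 : (1-θ) * (C * ((σ + θ * W) + ‖Δ‖)) - (1-θ) * σ * (T v)
            + θ * (ns * ((1 - θ) * W + ‖Δ‖)) = K₀ + K₁ * ‖Δ‖ - a * (T v) := by
          rw [hK₀def, hK₁def, hadef]
          ring
        linarith
      linarith
    -- combine E1 and E2
    have hTn : a * ‖T‖ ≤ K₀ + K₁ * ‖Δ‖ - A := by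
      have h1 : ‖T‖ ≤ (K₀ + K₁ * ‖Δ‖ - A) / a := by
        refine dual_norm_le_of_forall_le fun v hv => ?_
        rw [le_div_iff₀ ha]
        have := hE1 v hv
        linarith
      rw [le_div_iff₀ ha] at h1
      linarith
    have hAT : A ≤ ‖T‖ * ‖Δ‖ := by
      refine hE2.trans ?_
      have h1 := ContinuousLinearMap.le_opNorm T Δ
      have h2 := le_abs_self (T Δ)
      rw [← Real.norm_eq_abs] at h2
      linarith
    -- final arithmetic
    show A ≤ ρ * ‖Δ‖
    obtain ⟨r, hr⟩ : ∃ r : ℝ, r = ‖Δ‖ := ⟨_, rfl⟩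
    obtain ⟨nT, hnT⟩ : ∃ n : ℝ, n = ‖T‖ := ⟨_, rfl⟩
    obtain ⟨α, hα⟩ : ∃ α : ℝ, α = A := ⟨_, rfl⟩
    rw [← hr, ← hα]
    rw [← hr, ← hnT, ← hα] at hTn hAT
    have hrnn : 0 ≤ r := hr ▸ norm_nonneg _
    have hnTnn : 0 ≤ nT := hnT ▸ norm_nonneg _
    nlinarith [mul_nonneg hK₀ hrnn, mul_nonneg hK₁ (mul_nonneg ha.le ha.le), sq_nonneg r,
      mul_pos ha (ha.trans_le (le_refl a)), mul_nonneg (mul_nonneg hK₁ ha.le) hrnn]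
  obtain ⟨η, -, hη⟩ := exists_related_of_combos y ρ hρ Hcombo
  have hrel : MonotonicallyRelated B (y, η) := fun q hq => hη q hq
  exact ⟨η, mem_of_monRel hB hrel⟩


set_option maxHeartbeats 2000000 in
theorem aux_mem_domB_of_monotonically_related {X : Type*} [NormedAddCommGroup X] [NormedSpace ℝ X]
    [CompleteSpace X]
    (A B : Set (X × (X →L[ℝ] ℝ)))
    (hA : IsMonotoneOp A) (hB : IsMaxMonotoneOp B)
    (hstar : (starSet (opDom A) ∩ interior (opDom B)).Nonempty)
    (z : X) (zs : X →L[ℝ] ℝ)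
    (hz : z ∈ opDom A)
    (hrel : MonotonicallyRelated (opSum A B) (z, zs)) :
    z ∈ opDom B := by
  by_contra hzB
  obtain ⟨x₀, hx₀A, hx₀B⟩ := hstar
  obtain ⟨hx₀dom, hseg⟩ := hx₀A
  obtain ⟨σ, C, hσ, hC, hballB, hbddB⟩ := locBnd hB.1 hx₀B
  set d : X := z - x₀ with hd
  set y : ℝ → X := fun t => x₀ + t • d with hy
  have hy1 : y 1 = z := by rw [hy]; simp [hd]
  have hy0 : y 0 = x₀ := by rw [hy]; simp
  -- points on the segment are in dom A
  have hyA : ∀ t : ℝ, 0 ≤ t → t ≤ 1 → y t ∈ opDom A := by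
    intro t ht0 ht1
    refine hseg z hz ?_
    refine ⟨1 - t, t, by linarith, ht0, by ring, ?_⟩
    rw [hy, hd]
    match_scalars <;> ring
  obtain ⟨a₀s, ha₀s⟩ := hx₀dom
  obtain ⟨M, hMdef⟩ : ∃ M : ℝ, M = zs d - a₀s d := ⟨_, rfl⟩
  -- directional bound on B along the segment
  have hMbound : ∀ t : ℝ, 0 < t → t < 1 → ∀ bs : X →L[ℝ] ℝ, (y t, bs) ∈ B → bs d ≤ M := by
    intro t ht0 ht1 bs hbs
    obtain ⟨as, has⟩ := hyA t ht0.le ht1.le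
    have hsumMem : (y t, as + bs) ∈ opSum A B := ⟨as, bs, has, hbs, rfl⟩
    have h1 := hrel _ hsumMem
    simp only at h1
    have e1 : z - y t = (1 - t) • d := by rw [hy, hd]; match_scalars <;> ring
    rw [e1, map_smul, smul_eq_mul] at h1
    have h2 : 0 ≤ (zs - (as + bs)) d := by
      by_contra hcon
      push_neg at hcon
      nlinarith
    rw [ContinuousLinearMap.sub_apply, ContinuousLinearMap.add_apply] at h2
    have h3 := hA (y t, as) has (x₀, a₀s) ha₀s
    simp only at h3
    rw [ContinuousLinearMap.sub_apply] at h3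
    have e2 : y t - x₀ = t • d := by rw [hy]; match_scalars <;> ring
    rw [e2, map_smul, map_smul, smul_eq_mul, smul_eq_mul] at h3
    have h4 : a₀s d ≤ as d := by nlinarith
    rw [hMdef]
    linarith
  -- uniform norm bound on B along the segment
  obtain ⟨K, hKdef⟩ : ∃ K : ℝ, K = (max M 0 + C * (‖d‖ + σ)) / σ := ⟨_, rfl⟩
  have hKbound : ∀ t : ℝ, 0 < t → t < 1 → ∀ bs : X →L[ℝ] ℝ, (y t, bs) ∈ B → ‖bs‖ ≤ K := by
    intro t ht0 ht1 bs hbs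
    refine dual_norm_le_of_forall_le fun v hv => ?_
    have hmem : x₀ + σ • v ∈ Metric.closedBall x₀ σ := by
      rw [Metric.mem_closedBall, dist_eq_norm, add_sub_cancel_left, norm_smul,
        Real.norm_eq_abs, abs_of_pos hσ]
      nlinarith [norm_nonneg v]
    obtain ⟨cs, hcs⟩ := hballB hmem
    have hcsb : ‖cs‖ ≤ C := by
      refine hbddB (x₀ + σ • v, cs) hcs ?_
      simp only
      rw [add_sub_cancel_left, norm_smul, Real.norm_eq_abs, abs_of_pos hσ]
      nlinarith [norm_nonneg v]
    have hm := hB.1 (y t, bs) hbs (x₀ + σ • v, cs) hcs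
    simp only at hm
    rw [ContinuousLinearMap.sub_apply] at hm
    have e1 : y t - (x₀ + σ • v) = t • d - σ • v := by rw [hy]; match_scalars <;> ring
    rw [e1] at hm
    have hsplit : bs (t • d - σ • v) = t * bs d - σ * bs v := by
      rw [map_sub, map_smul, map_smul, smul_eq_mul, smul_eq_mul]
    rw [hsplit] at hm
    have hMd := hMbound t ht0 ht1 bs hbs
    have htM : t * bs d ≤ max M 0 := by
      rcases le_total 0 M with h | h
      · have : t * bs d ≤ t * M := mul_le_mul_of_nonneg_left hMd ht0.le
        have h2 : t * M ≤ M := by nlinarith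
        calc t * bs d ≤ t * M := this
        _ ≤ M := h2
        _ ≤ max M 0 := le_max_left _ _
      · have : t * bs d ≤ t * M := mul_le_mul_of_nonneg_left hMd ht0.le
        have h2 : t * M ≤ 0 := by nlinarith
        calc t * bs d ≤ t * M := this
        _ ≤ 0 := h2
        _ ≤ max M 0 := le_max_right _ _
    have hcsv : cs (t • d - σ • v) ≥ -(C * (‖d‖ + σ)) := by
      have h1 : ‖cs (t • d - σ • v)‖ ≤ ‖cs‖ * ‖t • d - σ • v‖ :=
        ContinuousLinearMap.le_opNorm _ _
      have h2 : ‖t • d - σ • v‖ ≤ ‖d‖ + σ := by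
        refine (norm_sub_le _ _).trans ?_
        have h3 : ‖t • d‖ ≤ ‖d‖ := by
          rw [norm_smul, Real.norm_eq_abs, abs_of_pos ht0]
          nlinarith [norm_nonneg d]
        have h4 : ‖σ • v‖ ≤ σ := by
          rw [norm_smul, Real.norm_eq_abs, abs_of_pos hσ]
          nlinarith [norm_nonneg v]
        linarith
      have h5 : ‖cs‖ * ‖t • d - σ • v‖ ≤ C * (‖d‖ + σ) :=
        mul_le_mul hcsb h2 (norm_nonneg _) hC
      have h6 := abs_le.1 (by rw [← Real.norm_eq_abs]; exact h1.trans h5 :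
        |cs (t • d - σ • v)| ≤ C * (‖d‖ + σ))
      linarith [h6.1]
    have h7 : σ * bs v ≤ max M 0 + C * (‖d‖ + σ) := by linarith
    rw [hKdef, le_div_iff₀ hσ]
    linarith
  -- the set of segment times within dom B
  set T : Set ℝ := {t | 0 ≤ t ∧ t ≤ 1 ∧ y t ∈ opDom B} with hT
  have h0T : (0:ℝ) ∈ T := by
    refine ⟨le_refl 0, by norm_num, ?_⟩
    rw [hy0]
    exact interior_subset hx₀B
  have hTne : T.Nonempty := ⟨0, h0T⟩
  have hTbdd : BddAbove T := ⟨1, fun t ht => ht.2.1⟩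
  set tb : ℝ := sSup T with htb
  have htb1 : tb ≤ 1 := csSup_le hTne (fun t ht => ht.2.1)
  have hnot1 : (1:ℝ) ∉ T := by
    intro h
    exact hzB (hy1 ▸ h.2.2)
  have htb0 : 0 < tb := by
    obtain ⟨ε₀, hε₀⟩ : ∃ e : ℝ, e = min (σ / (‖d‖ + 1)) 1 := ⟨_, rfl⟩
    have hdn : (0:ℝ) < ‖d‖ + 1 := by positivity
    have hε₀pos : 0 < ε₀ := by
      rw [hε₀]
      exact lt_min (by positivity) one_pos
    have hε₀1 : ε₀ ≤ 1 := by rw [hε₀]; exact min_le_right _ _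
    have hε₀T : ε₀ ∈ T := by
      refine ⟨hε₀pos.le, hε₀1, ?_⟩
      have hmem : y ε₀ ∈ Metric.closedBall x₀ σ := by
        rw [hy, Metric.mem_closedBall, dist_eq_norm]
        simp only [add_sub_cancel_left]
        rw [norm_smul, Real.norm_eq_abs, abs_of_pos hε₀pos]
        have h1 : ε₀ ≤ σ / (‖d‖ + 1) := by rw [hε₀]; exact min_le_left _ _
        have h2 : ε₀ * ‖d‖ ≤ (σ / (‖d‖ + 1)) * ‖d‖ :=
          mul_le_mul_of_nonneg_right h1 (norm_nonneg _)
        have h3 : (σ / (‖d‖ + 1)) * ‖d‖ ≤ σ := by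
          rw [div_mul_eq_mul_div, div_le_iff₀ hdn]
          nlinarith [norm_nonneg d]
        linarith
      exact hballB hmem
    exact lt_of_lt_of_le hε₀pos (le_csSup hTbdd hε₀T)
  -- approach the supremum
  have hseqex : ∀ n : ℕ, ∃ t, t ∈ T ∧ max (tb - 1/(n+1)) (tb/2) < t := by
    intro n
    refine exists_lt_of_lt_csSup hTne ?_
    refine max_lt ?_ (by linarith)
    have : (0:ℝ) < 1/(n+1) := by positivity
    linarith
  choose tn htnT htngt using hseqex
  have htn0 : ∀ n, 0 < tn n := fun n =>
    lt_of_le_of_lt (by linarith : (0:ℝ) ≤ tb/2) (lt_of_le_of_lt (le_max_right _ _) (htngt n))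
  have htnle : ∀ n, tn n ≤ tb := fun n => le_csSup hTbdd (htnT n)
  have htn1 : ∀ n, tn n < 1 := by
    intro n
    rcases lt_or_eq_of_le ((htnT n).2.1) with h | h
    · exact h
    · exact absurd (h ▸ htnT n) hnot1
  have hmemn : ∀ n, ∃ bs, (y (tn n), bs) ∈ B := fun n => (htnT n).2.2
  choose bsn hbsn using hmemn
  have htntend : Tendsto tn atTop (𝓝 tb) := by
    have h1 : Tendsto (fun n : ℕ => tb - 1/(n+1)) atTop (𝓝 tb) := by
      have h2 : Tendsto (fun n : ℕ => 1/((n:ℝ)+1)) atTop (𝓝 0) :=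
        tendsto_one_div_add_atTop_nhds_zero_nat
      have h3 := h2.const_sub tb
      simpa using h3
    refine tendsto_of_tendsto_of_tendsto_of_le_of_le h1 tendsto_const_nhds ?_ ?_
    · intro n
      exact le_of_lt (lt_of_le_of_lt (le_max_left _ _) (htngt n))
    · exact htnle
  have hytend : Tendsto (fun n => y (tn n)) atTop (𝓝 (y tb)) := by
    rw [hy]
    exact tendsto_const_nhds.add (htntend.smul_const d)
  have hybar : y tb ∈ opDom B := by
    refine cluster_mem_dom hB (fun n => (y (tn n), bsn n)) (fun n => hbsn n) hytend
      (fun n => hKbound (tn n) (htn0 n) (htn1 n) (bsn n) (hbsn n))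
  obtain ⟨bbar, hbbar⟩ := hybar
  have htblt1 : tb < 1 := by
    rcases lt_or_eq_of_le htb1 with h | h
    · exact h
    · exfalso
      refine hzB ?_
      rw [← hy1, ← h]
      exact ⟨bbar, hbbar⟩
  -- the point y tb is not interior to dom B
  have hybar_not : y tb ∉ interior (opDom B) := by
    intro hmem
    obtain ⟨κ, hκpos, hκ⟩ := Metric.mem_nhds_iff.1 (mem_interior_iff_mem_nhds.1 hmem)
    obtain ⟨s, hsdef⟩ : ∃ s : ℝ, s = tb + min ((1-tb)/2) (κ/(2*(‖d‖+1))) := ⟨_, rfl⟩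
    have hdn : (0:ℝ) < ‖d‖ + 1 := by positivity
    have hmin : 0 < min ((1-tb)/2) (κ/(2*(‖d‖+1))) := by
      refine lt_min (by linarith) (by positivity)
    have hs1 : s ≤ 1 := by
      rw [hsdef]
      have := min_le_left ((1-tb)/2) (κ/(2*(‖d‖+1)))
      linarith
    have hstb : tb < s := by rw [hsdef]; linarith
    have hsT : s ∈ T := by
      refine ⟨by linarith, hs1, ?_⟩
      refine hκ ?_
      rw [Metric.mem_ball, dist_eq_norm, hy]
      have e1 : x₀ + s • d - (x₀ + tb • d) = (s - tb) • d := by match_scalars <;> ring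
      simp only
      rw [e1, norm_smul, Real.norm_eq_abs, abs_of_pos (by linarith : (0:ℝ) < s - tb)]
      have h1 : s - tb ≤ κ/(2*(‖d‖+1)) := by
        rw [hsdef]
        have := min_le_right ((1-tb)/2) (κ/(2*(‖d‖+1)))
        linarith
      have h2 : (s - tb) * ‖d‖ ≤ (κ/(2*(‖d‖+1))) * ‖d‖ :=
        mul_le_mul_of_nonneg_right h1 (norm_nonneg _)
      have h3 : (κ/(2*(‖d‖+1))) * ‖d‖ < κ := by
        rw [div_mul_eq_mul_div, div_lt_iff₀ (by positivity)]
        nlinarith [norm_nonneg d]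
      linarith
    have := le_csSup hTbdd hsT
    linarith
  -- interior of dom B is convex
  have hUconv : Convex ℝ (interior (opDom B)) := by
    intro u₁ h₁ u₂ h₂ s t hs ht hst
    rcases eq_or_lt_of_le hs with hs0 | hs0
    · rw [← hs0] at hst ⊢
      simp only [zero_smul, zero_add] at hst ⊢
      rw [hst, one_smul]
      exact h₂
    rcases eq_or_lt_of_le ht with ht0 | ht0
    · rw [← ht0] at hst ⊢
      simp only [zero_smul, add_zero] at hst ⊢
      rw [hst, one_smul]
      exact h₁
    have ht1 : t < 1 := by linarith
    obtain ⟨σ₁, C₁, hσ₁, hC₁, hball₁, hbdd₁⟩ := locBnd hB.1 h₁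
    obtain ⟨w₂s, hw₂s⟩ := interior_subset h₂
    rw [mem_interior]
    refine ⟨Metric.ball (s • u₁ + t • u₂) (s * σ₁ / 2), ?_, Metric.isOpen_ball,
      Metric.mem_ball_self (by positivity)⟩
    intro x hx
    rw [Metric.mem_ball, dist_eq_norm] at hx
    obtain ⟨h, hhdef⟩ : ∃ h : X, h = x - (s • u₁ + t • u₂) := ⟨_, rfl⟩
    have hhn : ‖h‖ < s * σ₁ / 2 := hhdef ▸ hx
    obtain ⟨c', hc'⟩ : ∃ c' : X, c' = u₁ + s⁻¹ • h := ⟨_, rfl⟩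
    have hxc : x = c' + t • (u₂ - c') := by
      rw [hc', hhdef]
      have hsne : s ≠ 0 := hs0.ne'
      have hts : t = 1 - s := by linarith
      rw [hts]
      match_scalars
      all_goals field_simp
      all_goals ring
    have hball' : ∀ v : X, ‖v‖ ≤ σ₁/2 → c' + v ∈ opDom B := by
      intro v hv
      refine hball₁ ?_
      rw [Metric.mem_closedBall, dist_eq_norm]
      have e2 : c' + v - u₁ = s⁻¹ • h + v := by rw [hc']; abel
      rw [e2]
      have h3 : ‖s⁻¹ • h‖ ≤ σ₁ / 2 := by
        rw [norm_smul, Real.norm_eq_abs, abs_of_pos (by positivity : (0:ℝ) < s⁻¹)]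
        rw [inv_mul_le_iff₀ hs0]
        linarith
      refine (norm_add_le _ _).trans ?_
      linarith
    have hbdd' : ∀ p ∈ B, ‖p.1 - c'‖ ≤ σ₁/2 → ‖p.2‖ ≤ C₁ := by
      intro p hp hpc
      refine hbdd₁ p hp ?_
      have e2 : p.1 - u₁ = (p.1 - c') + s⁻¹ • h := by rw [hc']; abel
      rw [e2]
      have h3 : ‖s⁻¹ • h‖ ≤ σ₁ / 2 := by
        rw [norm_smul, Real.norm_eq_abs, abs_of_pos (by positivity : (0:ℝ) < s⁻¹)]
        rw [inv_mul_le_iff₀ hs0]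
        linarith
      refine (norm_add_le _ _).trans ?_
      linarith
    rw [hxc]
    exact segment_mem_dom hB (by positivity) hC₁ hball' hbdd' hw₂s ht0 ht1
  -- dom B is contained in the closure of its interior
  have hdomcl : opDom B ⊆ closure (interior (opDom B)) := by
    intro w hw
    obtain ⟨wss, hwss⟩ := hw
    have hint : ∀ θ : ℝ, 0 < θ → θ < 1 → x₀ + θ • (w - x₀) ∈ interior (opDom B) := by
      intro θ hθ0 hθ1
      have hθ1' : (0:ℝ) < 1 - θ := by linarith
      rw [mem_interior]
      refine ⟨Metric.ball (x₀ + θ • (w - x₀)) ((1-θ) * σ / 2), ?_, Metric.isOpen_ball,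
        Metric.mem_ball_self (by positivity)⟩
      intro x hx
      rw [Metric.mem_ball, dist_eq_norm] at hx
      obtain ⟨h, hhdef⟩ : ∃ h : X, h = x - (x₀ + θ • (w - x₀)) := ⟨_, rfl⟩
      have hhn : ‖h‖ < (1-θ) * σ / 2 := hhdef ▸ hx
      obtain ⟨c', hc'⟩ : ∃ c' : X, c' = x₀ + (1-θ)⁻¹ • h := ⟨_, rfl⟩
      have hxc : x = c' + θ • (w - c') := by
        have hne : (1:ℝ) - θ ≠ 0 := by linarith
        rw [hc', hhdef]
        match_scalars
        all_goals field_simp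
        all_goals ring
      have hball' : ∀ v : X, ‖v‖ ≤ σ/2 → c' + v ∈ opDom B := by
        intro v hv
        refine hballB ?_
        rw [Metric.mem_closedBall, dist_eq_norm]
        have e2 : c' + v - x₀ = (1-θ)⁻¹ • h + v := by rw [hc']; abel
        rw [e2]
        have h3 : ‖(1-θ)⁻¹ • h‖ ≤ σ / 2 := by
          rw [norm_smul, Real.norm_eq_abs, abs_of_pos (by positivity : (0:ℝ) < (1-θ)⁻¹)]
          rw [inv_mul_le_iff₀ hθ1']
          linarith
        refine (norm_add_le _ _).trans ?_
        linarith
      have hbdd' : ∀ p ∈ B, ‖p.1 - c'‖ ≤ σ/2 → ‖p.2‖ ≤ C := by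
        intro p hp hpc
        refine hbddB p hp ?_
        have e2 : p.1 - x₀ = (p.1 - c') + (1-θ)⁻¹ • h := by rw [hc']; abel
        rw [e2]
        have h3 : ‖(1-θ)⁻¹ • h‖ ≤ σ / 2 := by
          rw [norm_smul, Real.norm_eq_abs, abs_of_pos (by positivity : (0:ℝ) < (1-θ)⁻¹)]
          rw [inv_mul_le_iff₀ hθ1']
          linarith
        refine (norm_add_le _ _).trans ?_
        linarith
      rw [hxc]
      exact segment_mem_dom hB (by positivity) hC hball' hbdd' hwss hθ0 hθ1
    have hθseq : Tendsto (fun n : ℕ => x₀ + ((1:ℝ) - 1/((n:ℝ)+2)) • (w - x₀)) atTop (𝓝 w) := by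
      have h1 : Tendsto (fun n : ℕ => (1:ℝ) - 1/((n:ℝ)+2)) atTop (𝓝 1) := by
        have h2 : Tendsto (fun n : ℕ => 1/((n:ℝ)+2)) atTop (𝓝 0) := by
          have h3 : Tendsto (fun n : ℕ => ((n:ℝ)+2)) atTop atTop :=
            tendsto_atTop_add_const_right _ 2 tendsto_natCast_atTop_atTop
          simpa [one_div, Pi.inv_def] using h3.inv_tendsto_atTop
        have h5 := h2.const_sub (1:ℝ)
        simpa using h5
      have h4 := (h1.smul_const (w - x₀)).const_add x₀
      have e5 : x₀ + (1:ℝ) • (w - x₀) = w := by module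
      rw [e5] at h4
      exact h4
    refine mem_closure_of_tendsto hθseq ?_
    refine Filter.Eventually.of_forall fun n => ?_
    refine hint _ ?_ ?_
    · have h1 : 1/((n:ℝ)+2) < 1 := by
        rw [div_lt_one (by positivity)]
        linarith
      linarith
    · have h2 : (0:ℝ) < 1/((n:ℝ)+2) := by positivity
      linarith
  -- separation
  obtain ⟨f, hf⟩ := geometric_hahn_banach_open_point hUconv isOpen_interior hybar_not
  have hfle : ∀ u ∈ opDom B, f u ≤ f (y tb) := by
    intro u hu
    have h1 : closure (interior (opDom B)) ⊆ {x | f x ≤ f (y tb)} :=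
      closure_minimal (fun v hv => le_of_lt (hf v hv))
        (isClosed_le f.continuous continuous_const)
    exact h1 (hdomcl hu)
  have hfd : 0 < f d := by
    have h1 : f x₀ < f (y tb) := hf x₀ hx₀B
    have h2 : f (y tb) - f x₀ = tb * f d := by
      rw [hy]
      simp only [map_add, map_smul, smul_eq_mul]
      ring
    nlinarith
  -- the normal ray and the contradiction
  obtain ⟨lam, hlamdef⟩ : ∃ l : ℝ, l = max ((M - bbar d)/(f d)) 0 + 1 := ⟨_, rfl⟩
  have hlam0 : 0 ≤ lam := by
    rw [hlamdef]
    have := le_max_right ((M - bbar d)/(f d)) 0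
    linarith
  have hlamgt : M - bbar d < lam * f d := by
    have h1 : (M - bbar d)/(f d) < lam := by
      rw [hlamdef]
      have := le_max_left ((M - bbar d)/(f d)) 0
      linarith
    calc M - bbar d = ((M - bbar d)/(f d)) * f d := by field_simp
    _ < lam * f d := by exact mul_lt_mul_of_pos_right h1 hfd
  have hmonoξ : MonotonicallyRelated B (y tb, bbar + lam • f) := by
    intro q hq
    simp only
    rw [ContinuousLinearMap.sub_apply, ContinuousLinearMap.add_apply,
      ContinuousLinearMap.smul_apply, smul_eq_mul]
    have h1 := hB.1 (y tb, bbar) hbbar q hq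
    simp only at h1
    rw [ContinuousLinearMap.sub_apply] at h1
    have hq1 : q.1 ∈ opDom B := ⟨q.2, by simpa using hq⟩
    have h2 : f q.1 ≤ f (y tb) := hfle q.1 hq1
    have h3 : 0 ≤ f (y tb - q.1) := by
      rw [map_sub]
      linarith
    nlinarith
  have hξB := mem_of_monRel hB hmonoξ
  have hcontra := hMbound tb htb0 htblt1 (bbar + lam • f) hξB
  rw [ContinuousLinearMap.add_apply, ContinuousLinearMap.smul_apply, smul_eq_mul] at hcontra
  linarith


/-- a monotonically related point with `z ∈ dom A` lies in `dom B`. -/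
theorem mem_domB_of_monotonically_related {X : Type*} [NormedAddCommGroup X] [NormedSpace ℝ X]
    [CompleteSpace X]
    (A B : Set (X × (X →L[ℝ] ℝ)))
    (hA : IsMonotoneOp A) (hB : IsMaxMonotoneOp B)
    (hstar : (starSet (opDom A) ∩ interior (opDom B)).Nonempty)
    (z : X) (zs : X →L[ℝ] ℝ)
    (hz : z ∈ opDom A)
    (hrel : MonotonicallyRelated (opSum A B) (z, zs)) :
    z ∈ opDom B :=
  aux_mem_domB_of_monotonically_related A B hA hB hstar z zs hz hrel
end
end

section
/- Let X be a real Banach space, let A : X ⇉ X* be monotone, and let B : X ⇉ X* be maximally monotone. Let (z, z*) ∈ X × X*, let x₀ ∈ dom A ∩ int(dom B), and suppose there exist λ ∈ [0, 1) and a sequence (aₙ, aₙ*) in gra A with aₙ ∈ dom B for all n, such that aₙ → x₀ + λ(z − x₀) in norm and ⟨z − aₙ, aₙ*⟩ → +∞. Then F_{A+B}(z, z*) = +∞. -/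
set_option maxHeartbeats 1000000


open Set Filter Topology

noncomputable section

variable {X : Type*} [NormedAddCommGroup X] [NormedSpace ℝ X]

lemma loc_bdd {X : Type*} [NormedAddCommGroup X] [NormedSpace ℝ X] [CompleteSpace X]
    (B : Set (X × (X →L[ℝ] ℝ))) (hB : IsMonotoneOp B) (x₀ : X)
    (hx₀ : x₀ ∈ interior (opDom B)) :
    ∃ δ : ℝ, 0 < δ ∧ ∃ M : ℝ, 0 ≤ M ∧ (∀ y : X, ‖y - x₀‖ < δ → y ∈ opDom B) ∧
      (∀ p ∈ B, ‖p.1 - x₀‖ < δ → ‖p.2‖ ≤ M) := by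
  obtain ⟨r, hr, hball⟩ := Metric.isOpen_iff.1 isOpen_interior x₀ hx₀
  set r' := r / 2 with hr'def
  have hr' : 0 < r' := by positivity
  have hdom : ∀ y : X, ‖y - x₀‖ ≤ r' → y ∈ opDom B := by
    intro y hy
    exact interior_subset (hball (by rw [Metric.mem_ball, dist_eq_norm]; simp only [hr'def] at hy; linarith))
  have claim : ∃ k : ℕ, ∀ p ∈ B, ‖p.1 - x₀‖ < min r' (1 / (k + 1)) → ‖p.2‖ ≤ k := by
    by_contra hcon
    push_neg at hcon
    choose p hpB hpd hpn using hcon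
    set g : ℕ → X →L[ℝ] ℝ :=
      fun k => ((1 + ‖(p k).2‖ * ‖(p k).1 - x₀‖)⁻¹) • (p k).2 with hg
    have hD : ∀ k, (1 : ℝ) ≤ 1 + ‖(p k).2‖ * ‖(p k).1 - x₀‖ := by
      intro k
      nlinarith [norm_nonneg (p k).2, norm_nonneg ((p k).1 - x₀)]
    -- bound on g k (x - x₀) for x near x₀
    have hbound : ∀ (x : X) (xs : X →L[ℝ] ℝ), (x, xs) ∈ B → ‖x - x₀‖ ≤ r' →
        ∀ k, g k (x - x₀) ≤ ‖xs‖ * (r' + 1) + 1 := by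
      intro x xs hxs hxr k
      have hmono := hB (x, xs) hxs (p k) (hpB k)
      simp only [ContinuousLinearMap.sub_apply] at hmono
      have h1 : (p k).2 (x - (p k).1) ≤ xs (x - (p k).1) := by linarith
      have hd1 : ‖(p k).1 - x₀‖ < 1 := lt_of_lt_of_le (hpd k) (by
        apply min_le_of_right_le
        rw [div_le_one (by positivity)]
        have : (0:ℝ) ≤ k := Nat.cast_nonneg k
        linarith)
      have h2 : ‖x - (p k).1‖ ≤ r' + 1 := by
        calc ‖x - (p k).1‖ = ‖(x - x₀) - ((p k).1 - x₀)‖ := by abel_nf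
          _ ≤ ‖x - x₀‖ + ‖(p k).1 - x₀‖ := norm_sub_le _ _
          _ ≤ r' + 1 := by linarith
      have h3 : xs (x - (p k).1) ≤ ‖xs‖ * (r' + 1) := by
        calc xs (x - (p k).1) ≤ |xs (x - (p k).1)| := le_abs_self _
          _ ≤ ‖xs‖ * ‖x - (p k).1‖ := xs.le_opNorm _
          _ ≤ ‖xs‖ * (r' + 1) := by
              exact mul_le_mul_of_nonneg_left h2 (norm_nonneg _)
      have h4 : (p k).2 ((p k).1 - x₀) ≤ ‖(p k).2‖ * ‖(p k).1 - x₀‖ := by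
        calc (p k).2 ((p k).1 - x₀) ≤ |(p k).2 ((p k).1 - x₀)| := le_abs_self _
          _ ≤ ‖(p k).2‖ * ‖(p k).1 - x₀‖ := (p k).2.le_opNorm _
      have h5 : (p k).2 (x - x₀) ≤ ‖xs‖ * (r' + 1) + ‖(p k).2‖ * ‖(p k).1 - x₀‖ := by
        have : (p k).2 (x - x₀) = (p k).2 (x - (p k).1) + (p k).2 ((p k).1 - x₀) := by
          rw [← map_add]; congr 1; abel
        linarith
      have hgk : g k (x - x₀) = (1 + ‖(p k).2‖ * ‖(p k).1 - x₀‖)⁻¹ * (p k).2 (x - x₀) := by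
        simp [hg]
      rw [hgk]
      set D := 1 + ‖(p k).2‖ * ‖(p k).1 - x₀‖ with hDdef
      have hD1 : (1:ℝ) ≤ D := hD k
      have hD0 : (0:ℝ) < D := by linarith
      rw [inv_mul_le_iff₀ hD0]
      have hA0 : 0 ≤ ‖xs‖ * (r' + 1) := by positivity
      nlinarith [h5]
    have hptwise : ∀ u : X, ∃ C : ℝ, ∀ k, ‖g k u‖ ≤ C := by
      intro u
      set c := r' / (‖u‖ + 1) with hc
      have hc0 : 0 < c := by positivity
      set v := c • u with hv
      have hvn : ‖v‖ ≤ r' := by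
        rw [hv, norm_smul, Real.norm_eq_abs, abs_of_pos hc0, hc]
        rw [div_mul_eq_mul_div, div_le_iff₀ (by positivity)]
        nlinarith [norm_nonneg u, hr']
      obtain ⟨xsp, hxsp⟩ := hdom (x₀ + v) (by simpa using hvn)
      obtain ⟨xsm, hxsm⟩ := hdom (x₀ - v) (by simpa [norm_sub_rev] using (by simpa using hvn : ‖x₀ + v - x₀‖ ≤ r'))
      have hp := hbound (x₀ + v) xsp hxsp (by simpa using hvn)
      have hm := hbound (x₀ - v) xsm hxsm (by
        have : x₀ - v - x₀ = -v := by abel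
        rw [this, norm_neg]; exact hvn)
      refine ⟨(‖u‖ + 1) / r' * (max (‖xsp‖ * (r' + 1) + 1) (‖xsm‖ * (r' + 1) + 1)), fun k => ?_⟩
      have hvp : x₀ + v - x₀ = v := by abel
      have hvm : x₀ - v - x₀ = -v := by abel
      rw [hvp] at hp
      rw [hvm] at hm
      have h1 : g k v ≤ max (‖xsp‖ * (r' + 1) + 1) (‖xsm‖ * (r' + 1) + 1) :=
        le_trans (hp k) (le_max_left _ _)
      have h2 : -(g k v) ≤ max (‖xsp‖ * (r' + 1) + 1) (‖xsm‖ * (r' + 1) + 1) := by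
        have := hm k
        rw [map_neg] at this
        exact le_trans this (le_max_right _ _)
      have habs : |g k v| ≤ max (‖xsp‖ * (r' + 1) + 1) (‖xsm‖ * (r' + 1) + 1) :=
        abs_le.2 ⟨by linarith, h1⟩
      have hgu : g k u = (‖u‖ + 1) / r' * g k v := by
        rw [hv, map_smul, smul_eq_mul, hc]
        field_simp
      rw [Real.norm_eq_abs, hgu, abs_mul, abs_of_pos (by positivity : (0:ℝ) < (‖u‖ + 1) / r')]
      exact mul_le_mul_of_nonneg_left habs (by positivity)
    obtain ⟨C', hC'⟩ := banach_steinhaus hptwise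
    have hC'0 : 0 ≤ C' := le_trans (norm_nonneg _) (hC' 0)
    set k := Nat.ceil (2 * C') with hk
    have hkn : (k : ℝ) < ‖(p k).2‖ := hpn k
    set N := ‖(p k).2‖ with hN
    set d := ‖(p k).1 - x₀‖ with hd
    have hD0 : (0:ℝ) < 1 + N * d := by linarith [hD k]
    have hle : N ≤ C' * (1 + N * d) := by
      refine ContinuousLinearMap.opNorm_le_bound _ (by positivity) (fun u => ?_)
      have hgu : g k u = (1 + N * d)⁻¹ * (p k).2 u := by simp [hg, hN, hd]
      have h1 : ‖(p k).2 u‖ = (1 + N * d) * ‖g k u‖ := by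
        rw [hgu, Real.norm_eq_abs, Real.norm_eq_abs, abs_mul, abs_of_pos (by positivity : (0:ℝ) < (1 + N * d)⁻¹)]
        field_simp
      rw [h1]
      have h2 : ‖g k u‖ ≤ C' * ‖u‖ := (g k).le_of_opNorm_le (hC' k) u
      calc (1 + N * d) * ‖g k u‖ ≤ (1 + N * d) * (C' * ‖u‖) :=
            mul_le_mul_of_nonneg_left h2 (by positivity)
        _ = C' * (1 + N * d) * ‖u‖ := by ring
    have hdk : d * (k + 1) < 1 := by
      have := lt_of_lt_of_le (hpd k) (min_le_right _ _)
      rw [lt_div_iff₀ (by positivity)] at this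
      simpa [hd] using this
    have h2C : 2 * C' ≤ (k : ℝ) := Nat.le_ceil _
    have hd0 : (0:ℝ) ≤ d := norm_nonneg _
    have hN0 : (0:ℝ) ≤ N := norm_nonneg _
    have e1 : C' * N * (d * ((k:ℝ) + 1)) ≤ C' * N * 1 :=
      mul_le_mul_of_nonneg_left hdk.le (mul_nonneg hC'0 hN0)
    have e2 : N * ((k:ℝ) + 1) ≤ C' * (1 + N * d) * ((k:ℝ) + 1) :=
      mul_le_mul_of_nonneg_right hle (by positivity)
    have e3 : 2 * C' * ((k:ℝ) + 1) ≤ (k:ℝ) * ((k:ℝ) + 1) :=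
      mul_le_mul_of_nonneg_right h2C (by positivity)
    have e4 : 2 * C' * N ≤ (k:ℝ) * N := mul_le_mul_of_nonneg_right h2C hN0
    have e5 : (k:ℝ) * ((k:ℝ) + 2) ≤ N * ((k:ℝ) + 2) :=
      mul_le_mul_of_nonneg_right hkn.le (by positivity)
    nlinarith [e1, e2, e3, e4, e5]
  obtain ⟨k, hkbd⟩ := claim
  refine ⟨min r' (1 / (k + 1)), by positivity, k, Nat.cast_nonneg k, ?_, ?_⟩
  · intro y hy
    exact hdom y (le_of_lt (lt_of_lt_of_le hy (min_le_left _ _)))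
  · exact hkbd


/-- an unbounded sequence along the graph of `A` in `dom B`
forces the Fitzpatrick function of the sum to be `+∞`. -/
theorem fitz_sum_eq_top_of_unbounded_seq {X : Type*} [NormedAddCommGroup X] [NormedSpace ℝ X]
    [CompleteSpace X]
    (A B : Set (X × (X →L[ℝ] ℝ)))
    (hA : IsMonotoneOp A) (hB : IsMaxMonotoneOp B)
    (z : X) (zs : X →L[ℝ] ℝ) (x₀ : X)
    (hx₀ : x₀ ∈ opDom A ∩ interior (opDom B))
    (lam : ℝ) (hlam0 : 0 ≤ lam) (hlam1 : lam < 1)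
    (a : ℕ → X) (as : ℕ → (X →L[ℝ] ℝ))
    (hgra : ∀ n, (a n, as n) ∈ A)
    (hdomB : ∀ n, a n ∈ opDom B)
    (hconv : Filter.Tendsto a Filter.atTop (nhds (x₀ + lam • (z - x₀))))
    (hdiv : Filter.Tendsto (fun n => (as n) (z - a n)) Filter.atTop Filter.atTop) :
    fitz (opSum A B) (z, zs) = ⊤ := by
  obtain ⟨hx₀A, hx₀B⟩ := hx₀
  obtain ⟨δ, hδ, M, hM0, hdomδ, hbdd⟩ := loc_bdd B hB.1 x₀ hx₀B
  set l := x₀ + lam • (z - x₀) with hl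
  set t := δ / (2 * (‖z - x₀‖ + 1)) with ht
  have ht0 : 0 < t := by positivity
  have h1lam : 0 < 1 - lam := by linarith
  set s := (lam + t) / (1 - lam) with hs
  have hs0 : 0 < s := div_pos (by linarith) h1lam
  have hscoef : s * (1 - lam) = lam + t := by
    rw [hs]; field_simp
  set y : ℕ → X := fun n => a n - s • (z - a n) with hy
  have hylim : Filter.Tendsto y Filter.atTop (nhds (x₀ - t • (z - x₀))) := by
    have h1 : Filter.Tendsto y Filter.atTop (nhds (l - s • (z - l))) :=
      hconv.sub ((tendsto_const_nhds.sub hconv).const_smul s)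
    have h2 : l - s • (z - l) = x₀ - t • (z - x₀) := by
      have hzl : s • (z - l) = (lam + t) • (z - x₀) := by
        rw [hl, ← hscoef]
        module
      rw [hzl, hl]
      module
    rwa [h2] at h1
  have hynorm : ‖(x₀ - t • (z - x₀)) - x₀‖ < δ := by
    have he : x₀ - t • (z - x₀) - x₀ = -(t • (z - x₀)) := by abel
    rw [he, norm_neg, norm_smul, Real.norm_eq_abs, abs_of_pos ht0, ht]
    rw [div_mul_eq_mul_div, div_lt_iff₀ (by positivity)]
    nlinarith [norm_nonneg (z - x₀)]
  have E1 : ∀ᶠ n in Filter.atTop, ‖y n - x₀‖ < δ := by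
    have hten : Filter.Tendsto (fun n => ‖y n - x₀‖) Filter.atTop
        (nhds ‖(x₀ - t • (z - x₀)) - x₀‖) := (hylim.sub tendsto_const_nhds).norm
    exact hten.eventually_lt_const hynorm
  have E2 : ∀ᶠ n in Filter.atTop, ‖a n‖ ≤ ‖l‖ + 1 :=
    hconv.norm.eventually_le_const (by linarith)
  have E3 : ∀ᶠ n in Filter.atTop, ‖z - a n‖ ≤ ‖z - l‖ + 1 :=
    (tendsto_const_nhds.sub hconv).norm.eventually_le_const (by linarith)
  rw [fitz, EReal.eq_top_iff_forall_lt]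
  intro r
  set K := M * (‖z - l‖ + 1) + ‖zs‖ * (‖l‖ + 1) + 1 with hK
  have E4 : ∀ᶠ n in Filter.atTop, r + K < (as n) (z - a n) :=
    hdiv.eventually_gt_atTop (r + K)
  obtain ⟨n, h1n, h2n, h3n, h4n⟩ := (E1.and (E2.and (E3.and E4))).exists
  obtain ⟨b, hb⟩ := hdomB n
  obtain ⟨w, hw⟩ := hdomδ (y n) h1n
  have hwM : ‖w‖ ≤ M := hbdd (y n, w) hw h1n
  have hmono := hB.1 (a n, b) hb (y n, w) hw
  simp only at hmono
  have hay : a n - y n = s • (z - a n) := by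
    simp only [hy]; abel
  rw [hay, map_smul, smul_eq_mul] at hmono
  have hmono2 : 0 ≤ (b - w) (z - a n) := by nlinarith [hmono, hs0]
  have hbz : w (z - a n) ≤ b (z - a n) := by
    have h := hmono2
    simp only [ContinuousLinearMap.sub_apply] at h
    linarith
  have hwlow : -(M * (‖z - l‖ + 1)) ≤ w (z - a n) := by
    have habs : |w (z - a n)| ≤ M * (‖z - l‖ + 1) :=
      le_trans (w.le_opNorm _) (mul_le_mul hwM h3n (norm_nonneg _) hM0)
    linarith [neg_abs_le (w (z - a n))]
  have hzslow : -(‖zs‖ * (‖l‖ + 1)) ≤ zs (a n) := by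
    have habs : |zs (a n)| ≤ ‖zs‖ * (‖l‖ + 1) :=
      le_trans (zs.le_opNorm _) (mul_le_mul_of_nonneg_left h2n (norm_nonneg _))
    linarith [neg_abs_le (zs (a n))]
  have hq : ((a n, as n + b) : X × (X →L[ℝ] ℝ)) ∈ opSum A B := ⟨as n, b, hgra n, hb, rfl⟩
  have hVeq : (as n + b) z + zs (a n) - (as n + b) (a n)
      = (as n) (z - a n) + b (z - a n) + zs (a n) := by
    simp only [ContinuousLinearMap.add_apply, map_sub]; ring
  have hrV : r < (as n + b) z + zs (a n) - (as n + b) (a n) := by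
    rw [hVeq, hK] at *
    have hwz : w (z - a n) ≤ b (z - a n) := hbz
    linarith
  calc (r : EReal) < (((as n + b) z + zs (a n) - (as n + b) (a n) : ℝ) : EReal) := by
        exact_mod_cast hrV
    _ ≤ ⨆ q ∈ opSum A B, ((q.2 z + zs q.1 - q.2 q.1 : ℝ) : EReal) := by
        exact le_iSup_of_le ((a n, as n + b)) (le_iSup_of_le hq (le_refl _))
end
end

section
/- Let X be a real Banach space, let A : X ⇉ X* be monotone, and let B : X ⇉ X* be maximally monotone. Let (z, z*) ∈ X × X*, let x₀ ∈ dom A ∩ int(dom B), and suppose there exist λ ∈ [0, 1) and a sequence (aₙ) in dom A ∩ dom B such that aₙ → x₀ + λ(z − x₀) in norm and aₙ lies in the boundary of dom B for every n. Then F_{A+B}(z, z*) = +∞. -/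
open Set Filter Topology

noncomputable section

variable {X : Type*} [NormedAddCommGroup X] [NormedSpace ℝ X]

section Aux
variable {X : Type*} [NormedAddCommGroup X] [NormedSpace ℝ X]


/-- cluster point of a real sequence dominated by a convergent sequence -/
lemma myClusterPt_le_of_le {r c : ℕ → ℝ} {L cL : ℝ}
    (h : ClusterPt L (Filter.map r atTop)) (hrc : ∀ k, r k ≤ c k)
    (hc : Tendsto c atTop (𝓝 cL)) : L ≤ cL := by
  by_contra hlt
  push_neg at hlt
  set m := (cL + L) / 2 with hm
  have hcm : ∀ᶠ k in atTop, c k < m := hc.eventually_lt_const (by simp only [hm]; linarith)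
  have hrm : ∀ᶠ k in atTop, r k ≤ m := hcm.mono fun k hk => (hrc k).trans hk.le
  have hle : Filter.map r atTop ≤ 𝓟 (Iic m) := by
    rw [le_principal_iff, mem_map]
    exact hrm.mono fun k hk => hk
  have h2 : ClusterPt L (𝓟 (Iic m)) := h.mono hle
  have h3 : L ∈ closure (Iic m) := mem_closure_iff_clusterPt.2 h2
  rw [closure_Iic] at h3
  have : L ≤ m := h3
  linarith

/-- weak-* cluster point of a bounded sequence of functionals -/
lemma myExists_weak_cluster (g : ℕ → X →L[ℝ] ℝ) {M : ℝ}
    (hg : ∀ k, ‖g k‖ ≤ M) :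
    ∃ φ : X →L[ℝ] ℝ, ‖φ‖ ≤ M ∧
      ∀ v : X, ClusterPt (φ v) (Filter.map (fun k => g k v) atTop) := by
  set h : ℕ → WeakDual ℝ X := fun k => WeakDual.toStrongDual.symm (g k) with hh
  have hK : IsCompact (WeakDual.toStrongDual ⁻¹' Metric.closedBall 0 M) :=
    WeakDual.isCompact_closedBall (𝕜 := ℝ) (E := X) 0 M
  have hmem : ∀ k, h k ∈ WeakDual.toStrongDual ⁻¹' Metric.closedBall 0 M := by
    intro k
    simp only [mem_preimage, Metric.mem_closedBall, dist_zero_right]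
    have : WeakDual.toStrongDual (h k) = g k := by
      simp [hh]
    rw [this]
    exact hg k
  have hle : Filter.map h atTop ≤ 𝓟 (WeakDual.toStrongDual ⁻¹' Metric.closedBall 0 M) := by
    rw [le_principal_iff, mem_map]
    exact Eventually.of_forall hmem
  obtain ⟨φ₀, hφ₀mem, hφ₀⟩ := hK.exists_clusterPt hle
  refine ⟨WeakDual.toStrongDual φ₀, ?_, ?_⟩
  · simpa [Metric.mem_closedBall, dist_zero_right] using hφ₀mem
  · intro v
    have hcont : ContinuousAt (fun ψ : WeakDual ℝ X => ψ v) φ₀ :=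
      (WeakDual.eval_continuous v).continuousAt
    have htd : Tendsto (fun ψ : WeakDual ℝ X => ψ v) (Filter.map h atTop)
        (Filter.map (fun k => g k v) atTop) := by
      rw [Filter.tendsto_map'_iff]
      have : ((fun ψ : WeakDual ℝ X => ψ v) ∘ h) = fun k => g k v := rfl
      rw [this]
      exact tendsto_map
    exact hφ₀.map hcont htd


/-- The sublevel sets of the Fitzpatrick function with bounded witness. -/
def Cset (B : Set (X × (X →L[ℝ] ℝ))) (n : ℕ) : Set X :=
  {y | ∃ ys : X →L[ℝ] ℝ, ‖ys‖ ≤ (n : ℝ) ∧ ∀ p ∈ B, p.2 (y - p.1) + ys p.1 ≤ (n : ℝ)}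

lemma Cset_mono (B : Set (X × (X →L[ℝ] ℝ))) {m n : ℕ} (h : m ≤ n) :
    Cset B m ⊆ Cset B n := by
  rintro y ⟨ys, h1, h2⟩
  have hc : (m : ℝ) ≤ (n : ℝ) := Nat.cast_le.2 h
  exact ⟨ys, h1.trans hc, fun p hp => (h2 p hp).trans hc⟩

lemma Cset_convex (B : Set (X × (X →L[ℝ] ℝ))) (n : ℕ) : Convex ℝ (Cset B n) := by
  rintro y₁ ⟨ys₁, hn₁, hp₁⟩ y₂ ⟨ys₂, hn₂, hp₂⟩ a b ha hb hab
  refine ⟨a • ys₁ + b • ys₂, ?_, ?_⟩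
  · calc ‖a • ys₁ + b • ys₂‖ ≤ ‖a • ys₁‖ + ‖b • ys₂‖ := norm_add_le _ _
      _ = a * ‖ys₁‖ + b * ‖ys₂‖ := by
          rw [norm_smul a ys₁, norm_smul b ys₂, Real.norm_of_nonneg ha, Real.norm_of_nonneg hb]
      _ ≤ a * n + b * n := by
          exact add_le_add (mul_le_mul_of_nonneg_left hn₁ ha) (mul_le_mul_of_nonneg_left hn₂ hb)
      _ = n := by rw [← add_mul, hab, one_mul]
  · intro p hp
    have e1 := hp₁ p hp
    have e2 := hp₂ p hp
    have key : p.2 (a • y₁ + b • y₂ - p.1) + (a • ys₁ + b • ys₂) p.1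
        = a * (p.2 (y₁ - p.1) + ys₁ p.1) + b * (p.2 (y₂ - p.1) + ys₂ p.1) := by
      have hsplit : a • y₁ + b • y₂ - p.1 = a • (y₁ - p.1) + b • (y₂ - p.1) := by
        have hb' : b = 1 - a := by linarith
        subst hb'
        module
      rw [hsplit]
      simp only [map_add, map_smul, ContinuousLinearMap.add_apply,
        ContinuousLinearMap.smul_apply, smul_eq_mul]
      ring
    rw [key]
    calc a * (p.2 (y₁ - p.1) + ys₁ p.1) + b * (p.2 (y₂ - p.1) + ys₂ p.1)
        ≤ a * n + b * n :=
          add_le_add (mul_le_mul_of_nonneg_left e1 ha) (mul_le_mul_of_nonneg_left e2 hb)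
      _ = n := by rw [← add_mul, hab, one_mul]

lemma Cset_closed (B : Set (X × (X →L[ℝ] ℝ))) (n : ℕ) : IsClosed (Cset B n) := by
  have : IsSeqClosed (Cset B n) := by
    intro y y₀ hy hlim
    choose ys hys1 hys2 using hy
    obtain ⟨φ, hφ1, hφ2⟩ := myExists_weak_cluster ys hys1
    refine ⟨φ, hφ1, ?_⟩
    intro p hp
    have hcl : ClusterPt (φ p.1) (Filter.map (fun k => ys k p.1) atTop) := hφ2 p.1
    have hbd : ∀ k, ys k p.1 ≤ (n : ℝ) - p.2 (y k - p.1) := by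
      intro k
      have := hys2 k p hp
      linarith
    have htc : Tendsto (fun k => (n : ℝ) - p.2 (y k - p.1)) atTop
        (𝓝 ((n : ℝ) - p.2 (y₀ - p.1))) := by
      have h1 : Tendsto (fun k => y k - p.1) atTop (𝓝 (y₀ - p.1)) :=
        hlim.sub tendsto_const_nhds
      have h2 : Tendsto (fun k => p.2 (y k - p.1)) atTop (𝓝 (p.2 (y₀ - p.1))) :=
        (p.2.continuous.tendsto _).comp h1
      exact tendsto_const_nhds.sub h2
    have := myClusterPt_le_of_le hcl hbd htc
    linarith
  exact this.isClosed

lemma Cset_cover {B : Set (X × (X →L[ℝ] ℝ))} (hB : IsMonotoneOp B) :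
    convexHull ℝ (opDom B) ⊆ ⋃ n, Cset B n := by
  intro y hy
  rw [convexHull_eq] at hy
  obtain ⟨ι, t, w, zf, hw0, hw1, hz, hcm⟩ := hy
  have hmass : ∑ i ∈ t, w i • zf i = y := by
    rw [← hcm, Finset.centerMass_eq_of_sum_1 _ _ hw1]
  choose zs hzs using fun i (hi : i ∈ t) => hz i hi
  classical
  set ys : X →L[ℝ] ℝ := ∑ i ∈ t.attach, w i.1 • zs i.1 i.2 with hysdef
  set c : ℝ := ∑ i ∈ t.attach, w i.1 * (zs i.1 i.2) (zf i.1) with hcdef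
  obtain ⟨n, hn⟩ := exists_nat_ge (max ‖ys‖ c)
  refine mem_iUnion.2 ⟨n, ys, ?_, ?_⟩
  · exact (le_max_left _ _).trans hn
  · intro p hp
    have key : ∀ i ∈ t.attach, w i.1 * (p.2 (zf i.1 - p.1) + (zs i.1 i.2) p.1)
        ≤ w i.1 * (zs i.1 i.2) (zf i.1) := by
      intro i _
      have hmono := hB (zf i.1, zs i.1 i.2) (hzs i.1 i.2) p hp
      simp only [ContinuousLinearMap.sub_apply, map_sub] at hmono
      have : p.2 (zf i.1 - p.1) + (zs i.1 i.2) p.1 ≤ (zs i.1 i.2) (zf i.1) := by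
        simp only [map_sub] at *
        linarith
      exact mul_le_mul_of_nonneg_left this (hw0 i.1 i.2)
    have hsum : p.2 (y - p.1) + ys p.1
        = ∑ i ∈ t.attach, w i.1 * (p.2 (zf i.1 - p.1) + (zs i.1 i.2) p.1) := by
      have hy' : y = ∑ i ∈ t.attach, w i.1 • zf i.1 := by
        rw [← hmass, ← Finset.sum_attach t (fun i => w i • zf i)]
      have hw1' : ∑ i ∈ t.attach, w i.1 = 1 := by
        rw [Finset.sum_attach t w]; exact hw1
      rw [hy', hysdef]
      have e1 : p.2 ((∑ i ∈ t.attach, w i.1 • zf i.1) - p.1)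
          = (∑ i ∈ t.attach, w i.1 * p.2 (zf i.1)) - p.2 p.1 := by
        simp [map_sub, map_sum, map_smul, smul_eq_mul]
      have e2 : (∑ i ∈ t.attach, w i.1 • zs i.1 i.2) p.1
          = ∑ i ∈ t.attach, w i.1 * (zs i.1 i.2) p.1 := by
        simp
      have e3 : ∀ i ∈ t.attach, w i.1 * (p.2 (zf i.1 - p.1) + (zs i.1 i.2) p.1)
          = w i.1 * p.2 (zf i.1) - w i.1 * p.2 p.1 + w i.1 * (zs i.1 i.2) p.1 := by
        intro i _
        simp only [map_sub]
        ring
      rw [e1, e2, Finset.sum_congr rfl e3, Finset.sum_add_distrib, Finset.sum_sub_distrib,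
        ← Finset.sum_mul, hw1', one_mul]
    rw [hsum]
    calc ∑ i ∈ t.attach, w i.1 * (p.2 (zf i.1 - p.1) + (zs i.1 i.2) p.1)
        ≤ ∑ i ∈ t.attach, w i.1 * (zs i.1 i.2) (zf i.1) := Finset.sum_le_sum key
      _ = c := rfl
      _ ≤ n := (le_max_right _ _).trans hn

lemma baire_cset {B : Set (X × (X →L[ℝ] ℝ))} [CompleteSpace X] {xb : X} {ρ : ℝ} (hρ : 0 < ρ)
    (hball : Metric.ball xb ρ ⊆ ⋃ n, Cset B n) :
    ∃ (N : ℕ) (ε : ℝ), 0 < ε ∧ Metric.ball xb ε ⊆ Cset B N := by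
  set E : ℕ → Set X := fun n => Cset B n ∪ {y | ρ/2 ≤ dist y xb} with hE
  have hEclosed : ∀ n, IsClosed (E n) := by
    intro n
    exact (Cset_closed B n).union (isClosed_le continuous_const
      (continuous_id.dist continuous_const))
  have hEcover : (⋃ n, E n) = univ := by
    apply eq_univ_of_forall
    intro y
    rcases lt_or_ge (dist y xb) (ρ/2) with hy | hy
    · have : y ∈ Metric.ball xb ρ := by
        rw [Metric.mem_ball]; linarith
      obtain ⟨n, hn⟩ := mem_iUnion.1 (hball this)
      exact mem_iUnion.2 ⟨n, Or.inl hn⟩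
    · exact mem_iUnion.2 ⟨0, Or.inr hy⟩
  have hdense : Dense (⋃ n, interior (E n)) := dense_iUnion_interior_of_closed hEclosed hEcover
  obtain ⟨w, hw1, hw2⟩ := hdense.exists_mem_open Metric.isOpen_ball
    ((Metric.nonempty_ball.2 (by linarith : (0:ℝ) < ρ/4) : (Metric.ball xb (ρ/4)).Nonempty))
  obtain ⟨n, hn⟩ := mem_iUnion.1 hw1
  rw [Metric.mem_ball] at hw2
  obtain ⟨s, hs0, hsub⟩ := Metric.isOpen_iff.1 isOpen_interior w hn
  set s' := min s (ρ/8) with hs'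
  have hs'0 : 0 < s' := lt_min hs0 (by linarith)
  have hsubC : Metric.ball w s' ⊆ Cset B n := by
    intro v hv
    rw [Metric.mem_ball] at hv
    have hvE : v ∈ E n := interior_subset (hsub (by
      rw [Metric.mem_ball]; exact hv.trans_le (min_le_left _ _)))
    rcases hvE with h | h
    · exact h
    · exfalso
      have : dist v xb ≤ dist v w + dist w xb := dist_triangle _ _ _
      have hv8 : dist v w < ρ/8 := hv.trans_le (min_le_right _ _)
      have : dist v xb < ρ/2 := by linarith
      simp only [mem_setOf_eq] at h
      linarith
  set w' : X := xb + (xb - w) with hw'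
  have hw'ball : w' ∈ Metric.ball xb ρ := by
    rw [Metric.mem_ball, dist_eq_norm, hw']
    have : xb + (xb - w) - xb = xb - w := by abel
    rw [this, ← dist_eq_norm, dist_comm]
    linarith
  obtain ⟨m, hm⟩ := mem_iUnion.1 (hball hw'ball)
  set N := max n m with hN
  have hw'C : w' ∈ Cset B N := Cset_mono B (le_max_right n m) hm
  have hsubCN : Metric.ball w s' ⊆ Cset B N :=
    fun v hv => Cset_mono B (le_max_left n m) (hsubC hv)
  refine ⟨N, s'/2, by linarith, ?_⟩
  intro v hv
  rw [Metric.mem_ball, dist_eq_norm] at hv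
  set u : X := w + (2:ℝ) • (v - xb) with hu
  have huball : u ∈ Metric.ball w s' := by
    rw [Metric.mem_ball, dist_eq_norm, hu]
    have : w + (2:ℝ) • (v - xb) - w = (2:ℝ) • (v - xb) := by abel
    rw [this, norm_smul]
    simp only [Real.norm_ofNat]
    linarith
  have huC : u ∈ Cset B N := hsubCN huball
  have hcomb := (Cset_convex B N) hw'C huC (by norm_num : (0:ℝ) ≤ 1/2)
    (by norm_num : (0:ℝ) ≤ 1/2) (by norm_num)
  have : (1/2 : ℝ) • w' + (1/2 : ℝ) • u = v := by
    rw [hw', hu]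
    module
  rwa [this] at hcomb

section FiniteSystem
open Pointwise

variable {ι : Type*}

/-- Solvability of a finite system of linear inequalities with a norm bound,
given the natural positivity condition (a Farkas-type lemma via Hahn-Banach). -/
lemma finite_system (u : Finset ι) (v : ι → X) (β : ι → ℝ) {R : ℝ} (hR : 0 ≤ R)
    (hcond : ∀ lam : ι → ℝ, (∀ i ∈ u, 0 ≤ lam i) →
      -(R * ‖∑ i ∈ u, lam i • v i‖) ≤ ∑ i ∈ u, lam i * β i) :
    ∃ g : X →L[ℝ] ℝ, ‖g‖ ≤ R ∧ ∀ i ∈ u, g (v i) ≤ β i := by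
  classical
  set Λ : Set (ι → ℝ) := {lam | ∀ i ∈ u, 0 ≤ lam i} with hΛ
  set payoff : (ι → ℝ) → X → ℝ :=
    fun lam w => R * ‖w - ∑ i ∈ u, lam i • v i‖ + ∑ i ∈ u, lam i * β i with hpayoff
  set Qs : X → Set ℝ := fun w => (fun lam => payoff lam w) '' Λ with hQs
  set q : X → ℝ := fun w => sInf (Qs w) with hq
  have h0Λ : (0 : ι → ℝ) ∈ Λ := by
    intro i _
    simp
  have hpay0 : ∀ w, payoff 0 w = R * ‖w‖ := by
    intro w
    simp [hpayoff]
  have hne : ∀ w, (Qs w).Nonempty := by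
    intro w
    exact ⟨payoff 0 w, 0, h0Λ, rfl⟩
  have hlb : ∀ w, ∀ r ∈ Qs w, -(R * ‖w‖) ≤ r := by
    rintro w r ⟨lam, hlam, rfl⟩
    set S := ∑ i ∈ u, lam i • v i
    have h1 : ‖S‖ ≤ ‖w‖ + ‖w - S‖ := by
      calc ‖S‖ = ‖w - (w - S)‖ := by congr 1; abel
        _ ≤ ‖w‖ + ‖w - S‖ := norm_sub_le _ _
    have h2 : R * ‖S‖ ≤ R * (‖w‖ + ‖w - S‖) := mul_le_mul_of_nonneg_left h1 hR
    have h3 : -(R * ‖S‖) ≤ ∑ i ∈ u, lam i * β i := hcond lam hlam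
    have h4 : R * (‖w‖ + ‖w - S‖) = R * ‖w‖ + R * ‖w - S‖ := mul_add _ _ _
    simp only [hpayoff]
    linarith
  have hbdd : ∀ w, BddBelow (Qs w) := fun w => ⟨-(R * ‖w‖), fun r hr => hlb w r hr⟩
  have hqle : ∀ w, q w ≤ R * ‖w‖ := by
    intro w
    have hmem : R * ‖w‖ ∈ Qs w := ⟨0, h0Λ, hpay0 w⟩
    exact csInf_le (hbdd w) hmem
  have hqlow : ∀ w, -(R * ‖w‖) ≤ q w := fun w => le_csInf (hne w) (hlb w)
  -- value at the constraint vectors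
  have hqi : ∀ i ∈ u, q (v i) ≤ β i := by
    intro i hi
    set lam : ι → ℝ := fun j => if j = i then 1 else 0 with hlamdef
    have hlamΛ : lam ∈ Λ := by
      intro j _
      simp only [hlamdef]
      split <;> norm_num
    have hS : ∑ j ∈ u, lam j • v j = v i := by
      have : ∀ j ∈ u, lam j • v j = if j = i then v j else 0 := by
        intro j _
        simp only [hlamdef]
        split <;> simp
      rw [Finset.sum_congr rfl this, Finset.sum_ite_eq' u i (fun j => v j)]
      simp [hi]
    have hT : ∑ j ∈ u, lam j * β j = β i := by
      have : ∀ j ∈ u, lam j * β j = if j = i then β j else 0 := by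
        intro j _
        simp only [hlamdef]
        split <;> simp
      rw [Finset.sum_congr rfl this, Finset.sum_ite_eq' u i (fun j => β j)]
      simp [hi]
    have hval : payoff lam (v i) = β i := by
      simp only [hpayoff, hS, hT, sub_self, norm_zero, mul_zero, zero_add]
    have := csInf_le (hbdd (v i)) ⟨lam, hlamΛ, hval⟩
    exact this
  -- subadditivity
  have hqadd : ∀ w₁ w₂, q (w₁ + w₂) ≤ q w₁ + q w₂ := by
    intro w₁ w₂
    have key : ∀ lam₁ ∈ Λ, ∀ lam₂ ∈ Λ,
        q (w₁ + w₂) ≤ payoff lam₁ w₁ + payoff lam₂ w₂ := by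
      intro lam₁ h₁ lam₂ h₂
      have hmem : lam₁ + lam₂ ∈ Λ := by
        intro i hi
        have := h₁ i hi
        have := h₂ i hi
        simp only [Pi.add_apply]
        linarith
      have hle : payoff (lam₁ + lam₂) (w₁ + w₂) ≤ payoff lam₁ w₁ + payoff lam₂ w₂ := by
        have hS : ∑ i ∈ u, (lam₁ + lam₂) i • v i
            = (∑ i ∈ u, lam₁ i • v i) + ∑ i ∈ u, lam₂ i • v i := by
          rw [← Finset.sum_add_distrib]
          apply Finset.sum_congr rfl
          intro i _
          simp [add_smul]
        have hT : ∑ i ∈ u, (lam₁ + lam₂) i * β i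
            = (∑ i ∈ u, lam₁ i * β i) + ∑ i ∈ u, lam₂ i * β i := by
          rw [← Finset.sum_add_distrib]
          apply Finset.sum_congr rfl
          intro i _
          simp [add_mul]
        have hnorm : ‖w₁ + w₂ - ((∑ i ∈ u, lam₁ i • v i) + ∑ i ∈ u, lam₂ i • v i)‖
            ≤ ‖w₁ - ∑ i ∈ u, lam₁ i • v i‖ + ‖w₂ - ∑ i ∈ u, lam₂ i • v i‖ := by
          have : w₁ + w₂ - ((∑ i ∈ u, lam₁ i • v i) + ∑ i ∈ u, lam₂ i • v i)
              = (w₁ - ∑ i ∈ u, lam₁ i • v i) + (w₂ - ∑ i ∈ u, lam₂ i • v i) := by abel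
          rw [this]
          exact norm_add_le _ _
        have := mul_le_mul_of_nonneg_left hnorm hR
        simp only [hpayoff, hS, hT]
        rw [mul_add R] at this
        linarith
      exact (csInf_le (hbdd _) ⟨lam₁ + lam₂, hmem, rfl⟩).trans hle
    have step : ∀ r₁ ∈ Qs w₁, q (w₁ + w₂) - r₁ ≤ q w₂ := by
      rintro r₁ ⟨lam₁, h₁, rfl⟩
      apply le_csInf (hne w₂)
      rintro r₂ ⟨lam₂, h₂, rfl⟩
      have := key lam₁ h₁ lam₂ h₂
      linarith
    have step2 : q (w₁ + w₂) - q w₂ ≤ q w₁ := by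
      apply le_csInf (hne w₁)
      intro r₁ hr₁
      have := step r₁ hr₁
      linarith
    linarith
  -- positive homogeneity
  have hqhom : ∀ c : ℝ, 0 < c → ∀ w, q (c • w) = c * q w := by
    intro c hc w
    have him : Qs (c • w) = c • Qs w := by
      ext r
      rw [Set.mem_smul_set]
      constructor
      · rintro ⟨lam, hlam, rfl⟩
        refine ⟨payoff (c⁻¹ • lam) w, ⟨c⁻¹ • lam, ?_, rfl⟩, ?_⟩
        · intro i hi
          have := hlam i hi
          have hcinv : 0 ≤ c⁻¹ := (inv_pos.2 hc).le
          simp only [Pi.smul_apply, smul_eq_mul]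
          exact mul_nonneg hcinv this
        · show c • payoff (c⁻¹ • lam) w = payoff lam (c • w)
          simp only [smul_eq_mul, hpayoff]
          have hS : ∑ i ∈ u, (c⁻¹ • lam) i • v i = c⁻¹ • ∑ i ∈ u, lam i • v i := by
            rw [Finset.smul_sum]
            apply Finset.sum_congr rfl
            intro i _
            simp [smul_smul]
          have hT : ∑ i ∈ u, (c⁻¹ • lam) i * β i = c⁻¹ * ∑ i ∈ u, lam i * β i := by
            rw [Finset.mul_sum]
            apply Finset.sum_congr rfl
            intro i _
            simp only [Pi.smul_apply, smul_eq_mul]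
            ring
          rw [hS, hT]
          have hnorm : ‖w - c⁻¹ • ∑ i ∈ u, lam i • v i‖
              = c⁻¹ * ‖c • w - ∑ i ∈ u, lam i • v i‖ := by
            rw [show w - c⁻¹ • ∑ i ∈ u, lam i • v i
                = c⁻¹ • (c • w - ∑ i ∈ u, lam i • v i) by
              rw [smul_sub, smul_smul, inv_mul_cancel₀ hc.ne', one_smul]]
            rw [norm_smul, Real.norm_of_nonneg (inv_pos.2 hc).le]
          rw [hnorm]
          field_simp
          try ring
      · rintro ⟨r', ⟨lam, hlam, rfl⟩, rfl⟩
        refine ⟨c • lam, ?_, ?_⟩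
        · intro i hi
          have := hlam i hi
          simp only [Pi.smul_apply, smul_eq_mul]
          exact mul_nonneg hc.le this
        · show payoff (c • lam) (c • w) = c • payoff lam w
          simp only [smul_eq_mul, hpayoff]
          have hS : ∑ i ∈ u, (c • lam) i • v i = c • ∑ i ∈ u, lam i • v i := by
            rw [Finset.smul_sum]
            apply Finset.sum_congr rfl
            intro i _
            simp [smul_smul]
          have hT : ∑ i ∈ u, (c • lam) i * β i = c * ∑ i ∈ u, lam i * β i := by
            rw [Finset.mul_sum]
            apply Finset.sum_congr rfl
            intro i _
            simp only [Pi.smul_apply, smul_eq_mul]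
            ring
          rw [hS, hT]
          have hnorm : ‖c • w - c • ∑ i ∈ u, lam i • v i‖ = c * ‖w - ∑ i ∈ u, lam i • v i‖ := by
            rw [← smul_sub, norm_smul, Real.norm_of_nonneg hc.le]
          rw [hnorm]
          ring
    rw [hq]
    simp only
    rw [him, Real.sInf_smul_of_nonneg hc.le, smul_eq_mul]
  -- Hahn-Banach extension from the trivial subspace
  set f : X →ₗ.[ℝ] ℝ := ⟨⊥, 0⟩ with hf
  have hfle : ∀ x : f.domain, f x ≤ q x := by
    intro x
    have hx : (x : X) = 0 := by
      exact (Submodule.mem_bot ℝ).1 x.2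
    have h1 : f x = 0 := rfl
    rw [h1, hx]
    have := hqlow 0
    simpa using this
  obtain ⟨g, _, hgle⟩ := exists_extension_of_le_sublinear f q hqhom hqadd hfle
  have hgbound : ∀ x, ‖g x‖ ≤ R * ‖x‖ := by
    intro x
    have h1 : g x ≤ R * ‖x‖ := (hgle x).trans (hqle x)
    have h2 : -g x ≤ R * ‖x‖ := by
      have := (hgle (-x)).trans (hqle (-x))
      rw [map_neg, norm_neg] at this
      linarith
    rw [Real.norm_eq_abs, abs_le]
    constructor <;> linarith
  refine ⟨g.mkContinuous R hgbound, LinearMap.mkContinuous_norm_le g hR hgbound, ?_⟩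
  intro i hi
  exact (hgle (v i)).trans (hqi i hi)

end FiniteSystem

section Combo

variable {ι : Type*}

set_option maxHeartbeats 2000000 in
/-- Normalized combination estimate coming from monotonicity and the Baire bound. -/
lemma combo_estimate {B : Set (X × (X →L[ℝ] ℝ))} (hB : IsMonotoneOp B)
    {xb : X} {ε N : ℝ} (hε : 0 < ε) (hN : 0 ≤ N)
    (hstar : ∀ y : X, ‖y - xb‖ < ε → ∃ ys : X →L[ℝ] ℝ, ‖ys‖ ≤ N ∧
      ∀ p ∈ B, p.2 (y - p.1) + ys p.1 ≤ N)
    (fi : ι → X × (X →L[ℝ] ℝ)) (hfi : ∀ i, fi i ∈ B)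
    (u : Finset ι) (mu : ι → ℝ) (hmu : ∀ i ∈ u, 0 ≤ mu i) (hmu1 : ∑ i ∈ u, mu i = 1) :
    -(((N * (1 + ‖xb‖) + N) * (1 + 2/ε)) * ‖∑ i ∈ u, mu i • ((fi i).1 - xb)‖)
      ≤ ∑ i ∈ u, mu i * ((fi i).2 ((fi i).1 - xb)) := by
  classical
  set K : ℝ := N * (1 + ‖xb‖) with hK
  have hK0 : 0 ≤ K := by
    rw [hK]
    exact mul_nonneg hN (by positivity)
  set R : ℝ := (K + N) * (1 + 2/ε) with hR
  have hR0 : 0 ≤ R := by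
    rw [hR]
    exact mul_nonneg (by linarith) (by positivity)
  set d : ι → X := fun i => (fi i).1 - xb with hd
  set b : ι → ℝ := fun i => (fi i).2 (d i) with hb
  set wb : X := ∑ i ∈ u, mu i • d i with hwb
  set aS : X →L[ℝ] ℝ := ∑ i ∈ u, mu i • (fi i).2 with haS
  set cc : ℝ := -∑ i ∈ u, mu i * b i with hcc
  have haS_apply : ∀ x : X, aS x = ∑ i ∈ u, mu i * ((fi i).2 x) := by
    intro x
    rw [haS]
    simp [ContinuousLinearMap.sum_apply, ContinuousLinearMap.smul_apply, smul_eq_mul]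
  have happly_wb : ∀ g : X →L[ℝ] ℝ, g wb = ∑ j ∈ u, mu j * g (d j) := by
    intro g
    rw [hwb, map_sum]
    apply Finset.sum_congr rfl
    intro j _
    rw [map_smul, smul_eq_mul]
  -- Step A : cc ≤ ‖aS‖ * ‖wb‖
  have stepA : cc ≤ ‖aS‖ * ‖wb‖ := by
    have expand : ∀ i ∈ u, ∀ j ∈ u,
        mu i * mu j * (((fi i).2 - (fi j).2) ((fi i).1 - (fi j).1))
        = mu i * mu j * b i + mu i * mu j * b j
          - mu i * mu j * ((fi i).2 (d j)) - mu i * mu j * ((fi j).2 (d i)) := by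
      intro i _ j _
      have hdiff : (fi i).1 - (fi j).1 = d i - d j := by
        simp only [hd]; abel
      rw [hdiff]
      simp only [ContinuousLinearMap.sub_apply, map_sub, hb]
      ring
    have hnn : (0:ℝ) ≤ ∑ i ∈ u, ∑ j ∈ u,
        mu i * mu j * (((fi i).2 - (fi j).2) ((fi i).1 - (fi j).1)) := by
      apply Finset.sum_nonneg
      intro i hi
      apply Finset.sum_nonneg
      intro j hj
      exact mul_nonneg (mul_nonneg (hmu i hi) (hmu j hj)) (hB (fi i) (hfi i) (fi j) (hfi j))
    have h1 : ∑ i ∈ u, ∑ j ∈ u, mu i * mu j * b i = ∑ i ∈ u, mu i * b i := by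
      apply Finset.sum_congr rfl
      intro i _
      have : ∀ j ∈ u, mu i * mu j * b i = (mu i * b i) * mu j := fun j _ => by ring
      rw [Finset.sum_congr rfl this, ← Finset.mul_sum, hmu1, mul_one]
    have h2 : ∑ i ∈ u, ∑ j ∈ u, mu i * mu j * b j = ∑ j ∈ u, mu j * b j := by
      rw [Finset.sum_comm]
      apply Finset.sum_congr rfl
      intro j _
      have : ∀ i ∈ u, mu i * mu j * b j = (mu j * b j) * mu i := fun i _ => by ring
      rw [Finset.sum_congr rfl this, ← Finset.mul_sum, hmu1, mul_one]
    have h3 : ∑ i ∈ u, ∑ j ∈ u, mu i * mu j * ((fi i).2 (d j)) = aS wb := by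
      rw [haS_apply wb]
      apply Finset.sum_congr rfl
      intro i _
      rw [happly_wb ((fi i).2), Finset.mul_sum]
      apply Finset.sum_congr rfl
      intro j _
      ring
    have h4 : ∑ i ∈ u, ∑ j ∈ u, mu i * mu j * ((fi j).2 (d i)) = aS wb := by
      rw [Finset.sum_comm, haS_apply wb]
      apply Finset.sum_congr rfl
      intro j _
      rw [happly_wb ((fi j).2), Finset.mul_sum]
      apply Finset.sum_congr rfl
      intro i _
      ring
    have htotal : ∑ i ∈ u, ∑ j ∈ u,
        mu i * mu j * (((fi i).2 - (fi j).2) ((fi i).1 - (fi j).1))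
        = (∑ i ∈ u, mu i * b i) + (∑ j ∈ u, mu j * b j) - aS wb - aS wb := by
      have : ∀ i ∈ u, ∑ j ∈ u, mu i * mu j * (((fi i).2 - (fi j).2) ((fi i).1 - (fi j).1))
          = ∑ j ∈ u, (mu i * mu j * b i + mu i * mu j * b j
            - mu i * mu j * ((fi i).2 (d j)) - mu i * mu j * ((fi j).2 (d i))) := by
        intro i hi
        exact Finset.sum_congr rfl (fun j hj => expand i hi j hj)
      rw [Finset.sum_congr rfl this]
      simp only [Finset.sum_add_distrib, Finset.sum_sub_distrib]
      rw [h1, h2, h3, h4]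
    have hkey : aS wb ≤ ∑ i ∈ u, mu i * b i := by
      rw [htotal] at hnn
      linarith
    have habs : -(aS wb) ≤ ‖aS‖ * ‖wb‖ := by
      have h5 : ‖aS wb‖ ≤ ‖aS‖ * ‖wb‖ := aS.le_opNorm wb
      rw [Real.norm_eq_abs] at h5
      have := neg_abs_le (aS wb)
      linarith
    rw [hcc]
    linarith
  -- Step B : (ε/2) * ‖aS‖ ≤ K + N * ‖wb‖ - cc
  set M₀ : ℝ := K + N * ‖wb‖ - cc with hM₀
  have stepB : ε/2 * ‖aS‖ ≤ M₀ := by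
    have hM : ∀ h : X, ‖h‖ ≤ ε/2 → aS h ≤ M₀ := by
      intro h hh
      obtain ⟨ys, hys1, hys2⟩ := hstar (xb + h) (by
        rw [add_sub_cancel_left]
        linarith)
      have hcomb : ∑ i ∈ u, mu i * ((fi i).2 (xb + h - (fi i).1) + ys ((fi i).1))
          ≤ ∑ i ∈ u, mu i * N := by
        apply Finset.sum_le_sum
        intro i hi
        exact mul_le_mul_of_nonneg_left (hys2 (fi i) (hfi i)) (hmu i hi)
      have hrhs : ∑ i ∈ u, mu i * N = N := by
        rw [← Finset.sum_mul, hmu1, one_mul]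
      have hlhs : ∑ i ∈ u, mu i * ((fi i).2 (xb + h - (fi i).1) + ys ((fi i).1))
          = aS h + cc + ys wb + ys xb := by
        have e1 : ∀ i ∈ u, mu i * ((fi i).2 (xb + h - (fi i).1) + ys ((fi i).1))
            = mu i * ((fi i).2 h) - mu i * b i + mu i * ys (d i) + mu i * ys xb := by
          intro i _
          have hv : xb + h - (fi i).1 = h - d i := by simp only [hd]; abel
          have hv2 : (fi i).1 = d i + xb := by simp only [hd]; abel
          rw [hv, hv2, map_sub, map_add]
          simp only [hb]
          ring
        rw [Finset.sum_congr rfl e1]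
        simp only [Finset.sum_add_distrib, Finset.sum_sub_distrib]
        rw [← haS_apply h, ← happly_wb ys, ← Finset.sum_mul, hmu1, one_mul, hcc]
        ring
      have hbound1 : -(ys wb) ≤ N * ‖wb‖ := by
        have h5 : ‖ys wb‖ ≤ ‖ys‖ * ‖wb‖ := ys.le_opNorm wb
        have h6 : ‖ys‖ * ‖wb‖ ≤ N * ‖wb‖ :=
          mul_le_mul_of_nonneg_right hys1 (norm_nonneg _)
        rw [Real.norm_eq_abs] at h5
        have := neg_abs_le (ys wb)
        linarith
      have hbound2 : -(ys xb) ≤ N * ‖xb‖ := by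
        have h5 : ‖ys xb‖ ≤ ‖ys‖ * ‖xb‖ := ys.le_opNorm xb
        have h6 : ‖ys‖ * ‖xb‖ ≤ N * ‖xb‖ :=
          mul_le_mul_of_nonneg_right hys1 (norm_nonneg _)
        rw [Real.norm_eq_abs] at h5
        have := neg_abs_le (ys xb)
        linarith
      rw [hlhs, hrhs] at hcomb
      rw [hM₀, hK]
      nlinarith [norm_nonneg xb, norm_nonneg wb]
    have hM0nn : 0 ≤ M₀ := by
      have := hM 0 (by simp; linarith)
      simpa using this
    have hb2 : ∀ x : X, ‖aS x‖ ≤ (M₀ / (ε/2)) * ‖x‖ := by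
      intro x
      rcases eq_or_ne x 0 with rfl | hx
      · simp
      · have hxn : 0 < ‖x‖ := norm_pos_iff.2 hx
        set t : ℝ := ε/2 * ‖x‖⁻¹ with ht
        have ht0 : 0 < t := by rw [ht]; positivity
        have hhn : ‖t • x‖ = ε/2 := by
          rw [norm_smul, Real.norm_of_nonneg ht0.le, ht]
          field_simp
          try ring
        have hp : aS (t • x) ≤ M₀ := hM _ (le_of_eq hhn)
        have hm : -(aS (t • x)) ≤ M₀ := by
          have := hM (-(t • x)) (by rw [norm_neg]; exact le_of_eq hhn)
          rw [map_neg] at this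
          linarith
        have hval : aS (t • x) = t * aS x := by rw [map_smul, smul_eq_mul]
        rw [hval] at hp hm
        rw [Real.norm_eq_abs]
        rw [div_mul_eq_mul_div, le_div_iff₀ (by linarith : (0:ℝ) < ε/2)]
        have habs : |t * aS x| ≤ M₀ := abs_le.2 ⟨by linarith, hp⟩
        rw [abs_mul, abs_of_pos ht0] at habs
        have heq : |aS x| * (ε/2) = (t * |aS x|) * ‖x‖ := by
          rw [ht]
          field_simp
          try ring
        rw [heq]
        exact mul_le_mul_of_nonneg_right habs (norm_nonneg x)
    have : ‖aS‖ ≤ M₀ / (ε/2) :=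
      aS.opNorm_le_bound (div_nonneg hM0nn (by linarith)) hb2
    calc ε/2 * ‖aS‖ ≤ ε/2 * (M₀ / (ε/2)) :=
          mul_le_mul_of_nonneg_left this (by linarith)
      _ = M₀ := by
          field_simp
          try ring
  -- Step C : cc ≤ R * ‖wb‖ and conclusion
  have stepC : cc ≤ R * ‖wb‖ := by
    have h2e : (0:ℝ) ≤ 2/ε := by positivity
    have hRsum : R = (K + N) + (K + N) * (2/ε) := by rw [hR]; ring
    have hprod : 0 ≤ (K + N) * (2/ε) := mul_nonneg (by linarith) h2e
    have hRge1 : K + N ≤ R := by linarith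
    have hRge2 : 2/ε * (K + N) ≤ R := by
      have : 2/ε * (K + N) = (K + N) * (2/ε) := by ring
      linarith
    rcases le_or_gt cc 0 with hc0 | hc0
    · have : (0:ℝ) ≤ R * ‖wb‖ := mul_nonneg hR0 (norm_nonneg _)
      linarith
    rcases le_or_gt 1 ‖wb‖ with hw1 | hw1
    · have h5 : cc ≤ K + N * ‖wb‖ := by
        have h51 : 0 ≤ ε/2 * ‖aS‖ := mul_nonneg (by linarith) (norm_nonneg _)
        rw [hM₀] at stepB
        linarith
      have h6 : K + N * ‖wb‖ ≤ (K + N) * ‖wb‖ := by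
        have hKw : K ≤ K * ‖wb‖ := le_mul_of_one_le_right hK0 hw1
        have hexp : (K + N) * ‖wb‖ = K * ‖wb‖ + N * ‖wb‖ := by ring
        linarith
      have h7 : (K + N) * ‖wb‖ ≤ R * ‖wb‖ :=
        mul_le_mul_of_nonneg_right hRge1 (norm_nonneg _)
      linarith
    · have h6 : ε/2 * ‖aS‖ ≤ K + N := by
        rw [hM₀] at stepB
        have h61 : N * ‖wb‖ ≤ N := by
          have := mul_le_mul_of_nonneg_left hw1.le hN
          simpa using this
        linarith
      have h5 : ‖aS‖ ≤ 2/ε * (K + N) := by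
        rw [div_mul_eq_mul_div, le_div_iff₀ hε]
        have hKN0 : 0 ≤ K + N := by linarith
        calc ‖aS‖ * ε = (ε/2 * ‖aS‖) * 2 := by ring
          _ ≤ (K + N) * 2 := by linarith
          _ = 2 * (K + N) := by ring
      have h7 : cc ≤ (2/ε * (K + N)) * ‖wb‖ := by
        calc cc ≤ ‖aS‖ * ‖wb‖ := stepA
          _ ≤ (2/ε * (K + N)) * ‖wb‖ :=
              mul_le_mul_of_nonneg_right h5 (norm_nonneg _)
      have h8 : (2/ε * (K + N)) * ‖wb‖ ≤ R * ‖wb‖ :=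
        mul_le_mul_of_nonneg_right hRge2 (norm_nonneg _)
      linarith
  have hfinal : -(R * ‖wb‖) ≤ ∑ i ∈ u, mu i * b i := by
    rw [hcc] at stepC
    linarith
  exact hfinal

/-- The scaled (unnormalized) version of the combination estimate. -/
lemma lam_condition {B : Set (X × (X →L[ℝ] ℝ))} (hB : IsMonotoneOp B)
    {xb : X} {ε N : ℝ} (hε : 0 < ε) (hN : 0 ≤ N)
    (hstar : ∀ y : X, ‖y - xb‖ < ε → ∃ ys : X →L[ℝ] ℝ, ‖ys‖ ≤ N ∧
      ∀ p ∈ B, p.2 (y - p.1) + ys p.1 ≤ N)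
    (fi : ι → X × (X →L[ℝ] ℝ)) (hfi : ∀ i, fi i ∈ B)
    (u : Finset ι) (lam : ι → ℝ) (hlam : ∀ i ∈ u, 0 ≤ lam i) :
    -(((N * (1 + ‖xb‖) + N) * (1 + 2/ε)) * ‖∑ i ∈ u, lam i • ((fi i).1 - xb)‖)
      ≤ ∑ i ∈ u, lam i * ((fi i).2 ((fi i).1 - xb)) := by
  classical
  set R : ℝ := (N * (1 + ‖xb‖) + N) * (1 + 2/ε) with hR
  have hR0 : 0 ≤ R := by
    rw [hR]
    have : 0 ≤ N * (1 + ‖xb‖) := mul_nonneg hN (by positivity)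
    exact mul_nonneg (by linarith) (by positivity)
  set σ : ℝ := ∑ i ∈ u, lam i with hσ
  have hσ0 : 0 ≤ σ := Finset.sum_nonneg hlam
  rcases eq_or_lt_of_le hσ0 with hσeq | hσpos
  · have hall : ∀ i ∈ u, lam i = 0 :=
      (Finset.sum_eq_zero_iff_of_nonneg hlam).1 hσeq.symm
    have hv : ∑ i ∈ u, lam i • ((fi i).1 - xb) = 0 :=
      Finset.sum_eq_zero (fun i hi => by rw [hall i hi, zero_smul])
    have hs : ∑ i ∈ u, lam i * ((fi i).2 ((fi i).1 - xb)) = 0 :=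
      Finset.sum_eq_zero (fun i hi => by rw [hall i hi, zero_mul])
    rw [hv, hs, norm_zero, mul_zero, neg_zero]
  · set mu : ι → ℝ := fun i => lam i / σ with hmu
    have hmu0 : ∀ i ∈ u, 0 ≤ mu i := fun i hi => div_nonneg (hlam i hi) hσ0
    have hmu1 : ∑ i ∈ u, mu i = 1 := by
      rw [hmu]
      simp only
      rw [← Finset.sum_div, ← hσ, div_self hσpos.ne']
    have key := combo_estimate hB hε hN hstar fi hfi u mu hmu0 hmu1
    rw [← hR] at key
    have hlam_eq : ∀ i, lam i = σ * mu i := by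
      intro i
      rw [hmu]
      field_simp
    have hv : ∑ i ∈ u, lam i • ((fi i).1 - xb) = σ • ∑ i ∈ u, mu i • ((fi i).1 - xb) := by
      rw [Finset.smul_sum]
      apply Finset.sum_congr rfl
      intro i _
      rw [hlam_eq i, smul_smul]
    have hs : ∑ i ∈ u, lam i * ((fi i).2 ((fi i).1 - xb))
        = σ * ∑ i ∈ u, mu i * ((fi i).2 ((fi i).1 - xb)) := by
      rw [Finset.mul_sum]
      apply Finset.sum_congr rfl
      intro i _
      rw [hlam_eq i]
      ring
    rw [hv, hs, norm_smul, Real.norm_of_nonneg hσ0]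
    have := mul_le_mul_of_nonneg_left key hσ0
    calc -(R * (σ * ‖∑ i ∈ u, mu i • ((fi i).1 - xb)‖))
        = σ * -(R * ‖∑ i ∈ u, mu i • ((fi i).1 - xb)‖) := by ring
      _ ≤ σ * ∑ i ∈ u, mu i * ((fi i).2 ((fi i).1 - xb)) := this

end Combo

section ThmR

/-- For a convex set with an interior point, the set is contained in the closure
of its interior. -/
lemma convex_subset_closure_interior {s : Set X} (hs : Convex ℝ s) {x₀ : X}
    (hx₀ : x₀ ∈ interior s) : s ⊆ closure (interior s) := by
  intro y hy
  have hmem : ∀ k : ℕ, (1/((k:ℝ)+1)) • x₀ + (1 - 1/((k:ℝ)+1)) • y ∈ interior s := by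
    intro k
    have hk0 : (0:ℝ) < 1/((k:ℝ)+1) := by positivity
    have hk1 : 1/((k:ℝ)+1) ≤ 1 := by
      rw [div_le_one (by positivity)]
      linarith [Nat.cast_nonneg (α := ℝ) k]
    exact hs.combo_interior_closure_mem_interior hx₀ (subset_closure hy) hk0
      (by linarith) (by ring)
  have htend : Tendsto (fun k : ℕ => (1/((k:ℝ)+1)) • x₀ + (1 - 1/((k:ℝ)+1)) • y)
      atTop (𝓝 y) := by
    have h0 : Tendsto (fun k : ℕ => 1/((k:ℝ)+1)) atTop (𝓝 0) :=
      tendsto_one_div_add_atTop_nhds_zero_nat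
    have h1 : Tendsto (fun k : ℕ => (1/((k:ℝ)+1)) • x₀) atTop (𝓝 ((0:ℝ) • x₀)) :=
      h0.smul_const x₀
    have h2 : Tendsto (fun k : ℕ => (1 - 1/((k:ℝ)+1)) • y) atTop (𝓝 ((1-(0:ℝ)) • y)) :=
      (tendsto_const_nhds.sub h0).smul_const y
    have := h1.add h2
    simpa using this
  exact mem_closure_of_tendsto htend (Eventually.of_forall hmem)

/-- Rockafellar's theorem: for a maximally monotone operator on a Banach space, the
interior of the convex hull of the domain is contained in the domain. -/
theorem int_convexHull_subset_dom [CompleteSpace X] {B : Set (X × (X →L[ℝ] ℝ))}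
    (hB : IsMaxMonotoneOp B) {xb : X}
    (hxb : xb ∈ interior (convexHull ℝ (opDom B))) : xb ∈ opDom B := by
  obtain ⟨ρ, hρ0, hρball⟩ := Metric.isOpen_iff.1 isOpen_interior xb hxb
  have hball2 : Metric.ball xb ρ ⊆ ⋃ n, Cset B n :=
    fun y hy => Cset_cover hB.1 (interior_subset (hρball hy))
  obtain ⟨N, ε, hε0, hεsub⟩ := baire_cset hρ0 hball2
  have hstar : ∀ y : X, ‖y - xb‖ < ε → ∃ ys : X →L[ℝ] ℝ, ‖ys‖ ≤ (N:ℝ) ∧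
      ∀ p ∈ B, p.2 (y - p.1) + ys p.1 ≤ (N:ℝ) := by
    intro y hy
    have : y ∈ Metric.ball xb ε := by rw [Metric.mem_ball, dist_eq_norm]; exact hy
    exact hεsub this
  set R : ℝ := ((N:ℝ) * (1 + ‖xb‖) + N) * (1 + 2/ε) with hR
  have hR0 : 0 ≤ R := by
    rw [hR]
    have h1 : (0:ℝ) ≤ (N:ℝ) * (1 + ‖xb‖) := mul_nonneg (Nat.cast_nonneg N) (by positivity)
    exact mul_nonneg (by linarith [Nat.cast_nonneg (α := ℝ) N]) (by positivity)
  set t : {p : X × (X →L[ℝ] ℝ) // p ∈ B} → Set (WeakDual ℝ X) :=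
    fun q => {φ : WeakDual ℝ X | φ ((q : X × (X →L[ℝ] ℝ)).1 - xb)
      ≤ (q : X × (X →L[ℝ] ℝ)).2 ((q : X × (X →L[ℝ] ℝ)).1 - xb)} with ht
  have htc : ∀ q, IsClosed (t q) :=
    fun q => isClosed_le (WeakDual.eval_continuous _) continuous_const
  have hcpt : IsCompact (WeakDual.toStrongDual ⁻¹' Metric.closedBall 0 R) :=
    WeakDual.isCompact_closedBall (𝕜 := ℝ) (E := X) 0 R
  have hfin : ∀ u : Finset {p : X × (X →L[ℝ] ℝ) // p ∈ B},
      ((WeakDual.toStrongDual ⁻¹' Metric.closedBall 0 R) ∩ ⋂ i ∈ u, t i).Nonempty := by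
    intro u
    have hcond : ∀ lam : {p : X × (X →L[ℝ] ℝ) // p ∈ B} → ℝ, (∀ i ∈ u, 0 ≤ lam i) →
        -(R * ‖∑ i ∈ u, lam i • ((i : X × (X →L[ℝ] ℝ)).1 - xb)‖)
          ≤ ∑ i ∈ u, lam i * ((i : X × (X →L[ℝ] ℝ)).2 ((i : X × (X →L[ℝ] ℝ)).1 - xb)) := by
      intro lam hlam
      rw [hR]
      exact lam_condition hB.1 hε0 (Nat.cast_nonneg N) hstar
        (Subtype.val : {p : X × (X →L[ℝ] ℝ) // p ∈ B} → X × (X →L[ℝ] ℝ))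
        (fun i => i.property) u lam hlam
    obtain ⟨g, hg1, hg2⟩ := finite_system u (fun i => (i : X × (X →L[ℝ] ℝ)).1 - xb)
      (fun i => (i : X × (X →L[ℝ] ℝ)).2 ((i : X × (X →L[ℝ] ℝ)).1 - xb)) hR0 hcond
    refine ⟨WeakDual.toStrongDual.symm g, ?_, ?_⟩
    · simp only [mem_preimage, Metric.mem_closedBall, dist_zero_right]
      have : WeakDual.toStrongDual (WeakDual.toStrongDual.symm g) = g := by simp
      rw [this]
      exact hg1
    · rw [mem_iInter₂]
      intro i hi
      exact hg2 i hi
  obtain ⟨φ, hφball, hφt⟩ := hcpt.inter_iInter_nonempty t htc hfin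
  set xs : X →L[ℝ] ℝ := WeakDual.toStrongDual φ with hxs
  have hrel : ∀ p ∈ B, xs (p.1 - xb) ≤ p.2 (p.1 - xb) := by
    intro p hp
    have := mem_iInter.1 hφt ⟨p, hp⟩
    exact this
  set B' : Set (X × (X →L[ℝ] ℝ)) := insert (xb, xs) B with hB'
  have hmono : IsMonotoneOp B' := by
    intro p hp q hq
    rcases Set.mem_insert_iff.1 hp with rfl | hp' <;>
      rcases Set.mem_insert_iff.1 hq with hq' | hq'
    · rw [hq']
      simp
    · have h1 := hrel q hq'
      simp only [ContinuousLinearMap.sub_apply, map_sub] at h1 ⊢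
      linarith
    · rw [hq']
      have h1 := hrel p hp'
      simp only [ContinuousLinearMap.sub_apply, map_sub] at h1 ⊢
      linarith
    · exact hB.1 p hp' q hq'
  have heq := hB.2 B' hmono (Set.subset_insert _ _)
  have hmem : (xb, xs) ∈ B := by
    rw [← heq]
    exact Set.mem_insert _ _
  exact ⟨xs, hmem⟩

end ThmR

/-- A functional of norm bigger than `c ≥ 0` exceeds `c` somewhere on the unit ball. -/
lemma exists_unit_lt {g : X →L[ℝ] ℝ} {c : ℝ} (hc0 : 0 ≤ c) (hc : c < ‖g‖) :
    ∃ u : X, ‖u‖ ≤ 1 ∧ c < g u := by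
  by_contra hcon
  push_neg at hcon
  have hle : ‖g‖ ≤ c := by
    apply g.opNorm_le_bound hc0
    intro x
    rcases eq_or_ne x 0 with rfl | hx
    · simp [hc0]
    · have hxn : 0 < ‖x‖ := norm_pos_iff.2 hx
      have hun : ‖(‖x‖⁻¹ • x : X)‖ ≤ 1 := by
        rw [norm_smul, norm_inv, norm_norm, inv_mul_cancel₀ hxn.ne']
      have h1 : g (‖x‖⁻¹ • x) ≤ c := hcon _ hun
      have h2 : g (-(‖x‖⁻¹ • x)) ≤ c := hcon _ (by rwa [norm_neg])
      rw [map_neg] at h2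
      have habs : |g (‖x‖⁻¹ • x)| ≤ c := abs_le.2 ⟨by linarith, h1⟩
      rw [map_smul, smul_eq_mul, abs_mul, abs_of_pos (inv_pos.2 hxn)] at habs
      rw [Real.norm_eq_abs]
      calc |g x| = ‖x‖ * (‖x‖⁻¹ * |g x|) := by field_simp
        _ ≤ ‖x‖ * c := mul_le_mul_of_nonneg_left habs (norm_nonneg x)
        _ = c * ‖x‖ := by ring
  linarith

end Aux

set_option maxHeartbeats 2000000 in
/-- a sequence in `dom A ∩ dom B` lying on the boundary of `dom B`
forces the Fitzpatrick function of the sum to be `+∞`. -/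
theorem fitz_sum_eq_top_of_boundary_seq {X : Type*} [NormedAddCommGroup X] [NormedSpace ℝ X]
    [CompleteSpace X]
    (A B : Set (X × (X →L[ℝ] ℝ)))
    (hA : IsMonotoneOp A) (hB : IsMaxMonotoneOp B)
    (z : X) (zs : X →L[ℝ] ℝ) (x₀ : X)
    (hx₀ : x₀ ∈ opDom A ∩ interior (opDom B))
    (lam : ℝ) (hlam0 : 0 ≤ lam) (hlam1 : lam < 1)
    (a : ℕ → X)
    (hdom : ∀ n, a n ∈ opDom A ∩ opDom B)
    (hconv : Filter.Tendsto a Filter.atTop (nhds (x₀ + lam • (z - x₀))))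
    (hbdry : ∀ n, a n ∈ closure (opDom B) \ interior (opDom B)) :
    fitz (opSum A B) (z, zs) = ⊤ := by
  classical
  obtain ⟨hx₀A, hx₀B⟩ := hx₀
  obtain ⟨r, hr0, hrball⟩ := Metric.isOpen_iff.1 isOpen_interior x₀ hx₀B
  have hrdom : Metric.ball x₀ r ⊆ opDom B := fun y hy => interior_subset (hrball hy)
  rcases hlam0.eq_or_lt with hlam_eq | hlam_pos
  · exfalso
    have hxlx : x₀ + lam • (z - x₀) = x₀ := by rw [← hlam_eq]; simp
    rw [hxlx] at hconv
    have hev : ∀ᶠ n in atTop, a n ∈ interior (opDom B) :=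
      hconv.eventually (isOpen_interior.mem_nhds hx₀B)
    obtain ⟨n, hn⟩ := hev.exists
    exact (hbdry n).2 hn
  · set xl : X := x₀ + lam • (z - x₀) with hxl
    have hsub : interior (convexHull ℝ (opDom B)) ⊆ interior (opDom B) :=
      interior_maximal (fun y hy => int_convexHull_subset_dom hB hy) isOpen_interior
    have hx₀hull : x₀ ∈ interior (convexHull ℝ (opDom B)) :=
      interior_mono (subset_convexHull ℝ _) hx₀B
    have hpos : 0 < (1 - lam) * (r/4) := by nlinarith
    have hev : ∀ᶠ n in atTop, a n ∈ Metric.ball xl ((1 - lam) * (r/4)) :=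
      hconv.eventually (Metric.isOpen_ball.mem_nhds (Metric.mem_ball_self hpos))
    obtain ⟨n, hn'⟩ := hev.exists
    have hn : ‖a n - xl‖ < (1 - lam) * (r/4) := by
      rw [← dist_eq_norm]
      exact Metric.mem_ball.1 hn'
    obtain ⟨hanA, hanB⟩ := hdom n
    have hanI : a n ∉ interior (convexHull ℝ (opDom B)) := fun hc => (hbdry n).2 (hsub hc)
    obtain ⟨f, hf⟩ := geometric_hahn_banach_open_point
      ((convex_convexHull ℝ (opDom B)).interior) isOpen_interior hanI
    have hfdomle : ∀ y ∈ opDom B, f y ≤ f (a n) := by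
      intro y hy
      have h1 : y ∈ closure (interior (convexHull ℝ (opDom B))) :=
        convex_subset_closure_interior (convex_convexHull ℝ _) hx₀hull
          (subset_convexHull ℝ _ hy)
      have h2 : closure (interior (convexHull ℝ (opDom B))) ⊆ {w | f w ≤ f (a n)} :=
        closure_minimal (fun w hw => (hf w hw).le)
          (isClosed_le f.continuous continuous_const)
      exact h2 h1
    have hfne : f ≠ 0 := by
      intro hzero
      have := hf x₀ hx₀hull
      rw [hzero] at this
      simp at this
    have hfnorm : 0 < ‖f‖ := norm_pos_iff.2 hfne
    set g : X →L[ℝ] ℝ := ‖f‖⁻¹ • f with hg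
    have hg1 : ‖g‖ = 1 := by
      have h1 : ‖g‖ = ‖(‖f‖⁻¹)‖ * ‖f‖ := norm_smul _ f
      rw [h1, norm_inv, norm_norm, inv_mul_cancel₀ hfnorm.ne']
    have hgdom : ∀ y ∈ opDom B, g y ≤ g (a n) := by
      intro y hy
      rw [hg]
      simp only [ContinuousLinearMap.smul_apply, smul_eq_mul]
      exact mul_le_mul_of_nonneg_left (hfdomle y hy) (inv_nonneg.2 (norm_nonneg f))
    obtain ⟨u, hu1, hu2⟩ := exists_unit_lt (g := g) (c := 1/2) (by norm_num)
      (by rw [hg1]; norm_num)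
    have hgval : r/4 < g (a n - x₀) := by
      have hmem : x₀ + (r/2) • u ∈ opDom B := by
        apply hrdom
        rw [Metric.mem_ball, dist_eq_norm]
        have : x₀ + (r/2) • u - x₀ = (r/2) • u := by abel
        rw [this, norm_smul, Real.norm_of_nonneg (by linarith)]
        calc r/2 * ‖u‖ ≤ r/2 * 1 := mul_le_mul_of_nonneg_left hu1 (by linarith)
          _ < r := by linarith
      have h1 := hgdom _ hmem
      rw [map_add, map_smul, smul_eq_mul] at h1
      have h2 : r/4 < r/2 * g u := by nlinarith
      rw [map_sub]
      linarith
    set en : ℝ := ‖a n - xl‖ with hen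
    have hgen : g (a n - xl) ≤ en := by
      have h1 := g.le_opNorm (a n - xl)
      rw [hg1, one_mul] at h1
      calc g (a n - xl) ≤ |g (a n - xl)| := le_abs_self _
        _ = ‖g (a n - xl)‖ := (Real.norm_eq_abs _).symm
        _ ≤ en := h1
    have hk1 : g (a n - x₀) ≤ lam * g (z - x₀) + en := by
      have hsplit : a n - x₀ = (a n - xl) + lam • (z - x₀) := by
        rw [hxl]; abel
      rw [hsplit, map_add, map_smul, smul_eq_mul]
      linarith
    have hδeq : g (z - a n) = g (z - x₀) - g (a n - x₀) := by
      rw [← map_sub]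
      congr 1
      abel
    have hδlow : (1 - lam) * g (z - x₀) - en ≤ g (z - a n) := by
      rw [hδeq]
      nlinarith [hk1]
    have hlamg : r/4 - en ≤ lam * g (z - x₀) := by linarith
    have hδpos : 0 < g (z - a n) := by
      have h1 : lam * g (z - a n) ≥ lam * ((1 - lam) * g (z - x₀) - en) :=
        mul_le_mul_of_nonneg_left hδlow hlam_pos.le
      have h2 : lam * ((1-lam) * g (z - x₀) - en)
          = (1-lam) * (lam * g (z - x₀)) - lam * en := by ring
      have h3 : (1-lam) * (lam * g (z - x₀)) ≥ (1-lam) * (r/4 - en) :=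
        mul_le_mul_of_nonneg_left hlamg (by linarith)
      have h4 : 0 < lam * g (z - a n) := by nlinarith
      rcases mul_pos_iff.1 h4 with ⟨_, hd⟩ | ⟨hneg, _⟩
      · exact hd
      · linarith
    obtain ⟨as, hasA⟩ := hanA
    obtain ⟨bs, hbsB⟩ := hanB
    have hins : ∀ tt : ℝ, 0 ≤ tt → (a n, bs + tt • g) ∈ B := by
      intro tt htt
      set B' : Set (X × (X →L[ℝ] ℝ)) := insert (a n, bs + tt • g) B with hB'2
      have hmono : IsMonotoneOp B' := by
        intro p hp q hq
        rcases Set.mem_insert_iff.1 hp with rfl | hp' <;>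
          rcases Set.mem_insert_iff.1 hq with hq' | hq'
        · rw [hq']; simp
        · have h1 := hB.1 (a n, bs) hbsB q hq'
          have h2 : g q.1 ≤ g (a n) := hgdom q.1 ⟨q.2, by rwa [Prod.mk.eta]⟩
          have h3 : tt * g q.1 ≤ tt * g (a n) := mul_le_mul_of_nonneg_left h2 htt
          simp only [ContinuousLinearMap.sub_apply, ContinuousLinearMap.add_apply,
            ContinuousLinearMap.smul_apply, map_sub, smul_eq_mul] at h1 ⊢
          linarith
        · rw [hq']
          have h1 := hB.1 p hp' (a n, bs) hbsB
          have h2 : g p.1 ≤ g (a n) := hgdom p.1 ⟨p.2, by rwa [Prod.mk.eta]⟩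
          have h3 : tt * g p.1 ≤ tt * g (a n) := mul_le_mul_of_nonneg_left h2 htt
          simp only [ContinuousLinearMap.sub_apply, ContinuousLinearMap.add_apply,
            ContinuousLinearMap.smul_apply, map_sub, smul_eq_mul] at h1 ⊢
          linarith
        · exact hB.1 p hp' q hq'
      have heq := hB.2 B' hmono (Set.subset_insert _ _)
      rw [← heq]
      exact Set.mem_insert _ _
    have key : ∀ M : ℝ, ∃ q ∈ opSum A B, (M:ℝ) < q.2 z + zs q.1 - q.2 q.1 := by
      intro M
      set C₀ : ℝ := (as + bs) z + zs (a n) - (as + bs) (a n) with hC₀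
      set δ : ℝ := g (z - a n) with hδ
      set tt : ℝ := max 0 ((M + 1 - C₀)/δ) with htt
      have htt0 : 0 ≤ tt := le_max_left _ _
      refine ⟨(a n, as + (bs + tt • g)),
        ⟨as, bs + tt • g, hasA, hins tt htt0, rfl⟩, ?_⟩
      have hval : (as + (bs + tt • g)) z + zs (a n) - (as + (bs + tt • g)) (a n)
          = C₀ + tt * (g z - g (a n)) := by
        simp only [hC₀, ContinuousLinearMap.add_apply, ContinuousLinearMap.smul_apply,
          smul_eq_mul]
        ring
      have hδ' : g z - g (a n) = δ := by rw [hδ, map_sub]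
      have hdiv : (M + 1 - C₀)/δ ≤ tt := le_max_right _ _
      have h5 : M + 1 - C₀ ≤ tt * δ := by
        have := (div_le_iff₀ hδpos).1 hdiv
        linarith
      show (M:ℝ) < (as + (bs + tt • g)) z + zs (a n) - (as + (bs + tt • g)) (a n)
      rw [hval, hδ']
      linarith
    by_contra hne
    have hlt : fitz (opSum A B) (z, zs) < ⊤ := lt_top_iff_ne_top.2 hne
    obtain ⟨M, hM1, hM2⟩ := EReal.exists_between_coe_real hlt
    obtain ⟨q, hq, hqv⟩ := key M
    have hle : ((q.2 z + zs q.1 - q.2 q.1 : ℝ) : EReal) ≤ fitz (opSum A B) (z, zs) := by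
      apply le_iSup₂ (f := fun (p : X × (X →L[ℝ] ℝ)) (_ : p ∈ opSum A B) =>
        ((p.2 z + zs p.1 - p.2 p.1 : ℝ) : EReal)) q hq
    have hcoe : (M : EReal) < ((q.2 z + zs q.1 - q.2 q.1 : ℝ) : EReal) :=
      EReal.coe_lt_coe_iff.2 hqv
    exact lt_irrefl _ (hM1.trans (hcoe.trans_le hle))
end
end

section
/- Let X be a real Banach space and let A : X ⇉ X* be of type (FPV). Suppose x₀ ∈ dom A and z ∉ cl(dom A) (the norm closure of dom A). Then there exist λ ∈ [0, 1) and a sequence (aₙ, aₙ*) in gra A such that aₙ → x₀ + λ(z − x₀) in norm and ⟨z − aₙ, aₙ*⟩ → +∞. -/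
open Set Filter Topology

noncomputable section

variable {X : Type*} [NormedAddCommGroup X] [NormedSpace ℝ X]

open Pointwise in
/-- for an (FPV) operator, a point outside `cl(dom A)` admits an
unbounded sequence along the graph. -/
theorem exists_unbounded_seq_of_not_mem_closure {X : Type*} [NormedAddCommGroup X]
    [NormedSpace ℝ X] [CompleteSpace X]
    (A : Set (X × (X →L[ℝ] ℝ)))
    (hFPV : IsFPV A)
    (x₀ : X) (hx₀ : x₀ ∈ opDom A)
    (z : X) (hz : z ∉ closure (opDom A)) :
    ∃ (lam : ℝ), 0 ≤ lam ∧ lam < 1 ∧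
      ∃ (a : ℕ → X) (as : ℕ → (X →L[ℝ] ℝ)),
        (∀ n, (a n, as n) ∈ A) ∧
        Filter.Tendsto a Filter.atTop (nhds (x₀ + lam • (z - x₀))) ∧
        Filter.Tendsto (fun n => (as n) (z - a n)) Filter.atTop Filter.atTop := by
  by_contra hcon
  push_neg at hcon
  -- basic facts
  have hzx : z ≠ x₀ := by
    intro h
    exact hz (h ▸ subset_closure hx₀)
  have hR : (0:ℝ) < ‖z - x₀‖ := norm_pos_iff.2 (sub_ne_zero.2 hzx)
  set R := ‖z - x₀‖ with hRdef
  set seg : ℝ → X := fun s => x₀ + s • (z - x₀) with hsegdef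
  have hsegcont : Continuous seg := by
    exact continuous_const.add (continuous_id.smul continuous_const)
  -- Step 1: local boundedness near each segment point
  have key : ∀ lam : ℝ, 0 ≤ lam → lam < 1 →
      ∃ ε : ℝ, 0 < ε ∧ ∃ M : ℝ, ∀ p ∈ A, ‖p.1 - seg lam‖ < ε → p.2 (z - p.1) ≤ M := by
    intro lam h0 h1
    by_contra hk
    push_neg at hk
    have hsel : ∀ n : ℕ, ∃ p, p ∈ A ∧ ‖p.1 - seg lam‖ < 1/(n+1) ∧ (n:ℝ) < p.2 (z - p.1) := by
      intro n
      obtain ⟨p, hpA, hp1, hp2⟩ := hk (1/(n+1)) (by positivity) n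
      exact ⟨p, hpA, hp1, hp2⟩
    choose p hpA hp1 hp2 using hsel
    have hten : Tendsto (fun n => (p n).1) atTop (nhds (seg lam)) := by
      rw [Metric.tendsto_atTop]
      intro ε hε
      obtain ⟨N, hN⟩ := exists_nat_gt (1/ε)
      refine ⟨N, fun n hn => ?_⟩
      have hc : (N:ℝ) ≤ n := Nat.cast_le.2 hn
      have h1 : 1/ε < (n:ℝ) + 1 := by linarith
      have h2 : 1/((n:ℝ)+1) < ε := by
        rw [div_lt_iff₀ (by positivity)]
        rw [div_lt_iff₀ hε] at h1
        linarith
      rw [dist_eq_norm]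
      exact lt_trans (hp1 n) h2
    have hdiv : Tendsto (fun n => (p n).2 (z - (p n).1)) atTop atTop :=
      tendsto_atTop_mono (fun n => (hp2 n).le) tendsto_natCast_atTop_atTop
    exact hcon lam h0 h1 (fun n => (p n).1) (fun n => (p n).2)
      (fun n => by simpa using hpA n) hten hdiv
  have key' : ∀ lam : ℝ, ∃ ε M, 0 < ε ∧ (0 ≤ lam → lam < 1 →
      ∀ p ∈ A, ‖p.1 - seg lam‖ < ε → p.2 (z - p.1) ≤ M) := by
    intro lam
    by_cases h : 0 ≤ lam ∧ lam < 1
    · obtain ⟨ε, hε, M, hM⟩ := key lam h.1 h.2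
      exact ⟨ε, M, hε, fun _ _ => hM⟩
    · exact ⟨1, 0, one_pos, fun h0 h1 => absurd ⟨h0, h1⟩ h⟩
  choose ε M hε hbd using key'
  -- λ̄ and θ
  set T : Set ℝ := {t | t ∈ Icc (0:ℝ) 1 ∧ seg t ∈ closure (opDom A)} with hTdef
  have h0T : (0:ℝ) ∈ T := by
    refine ⟨⟨le_refl 0, zero_le_one⟩, ?_⟩
    have : seg 0 = x₀ := by simp [hsegdef]
    rw [this]
    exact subset_closure hx₀
  have hTbdd : BddAbove T := ⟨1, fun t ht => ht.1.2⟩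
  set lb := sSup T with hlbdef
  have hlb0 : 0 ≤ lb := le_csSup hTbdd h0T
  have hlb1 : lb < 1 := by
    obtain ⟨ρ, hρ, hball⟩ := Metric.isOpen_iff.1 (isOpen_compl_iff.2 isClosed_closure) z hz
    have hub : ∀ t ∈ T, t ≤ 1 - ρ/R := by
      intro t ht
      have h1 : seg t ∉ Metric.ball z ρ := fun hmem => hball hmem ht.2
      have h2 : ρ ≤ dist (seg t) z := not_lt.1 (fun hlt => h1 hlt)
      have h3 : dist (seg t) z = (1 - t) * R := by
        rw [dist_eq_norm]
        have : seg t - z = (t - 1) • (z - x₀) := by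
          simp only [hsegdef]
          module
        rw [this, norm_smul, Real.norm_eq_abs, abs_of_nonpos (by linarith [ht.1.2])]
        ring
      rw [h3] at h2
      have h4 : ρ/R ≤ 1 - t := by rw [div_le_iff₀ hR]; nlinarith
      linarith
    have := csSup_le ⟨0, h0T⟩ hub
    have hρR : 0 < ρ/R := div_pos hρ hR
    linarith
  set θ := (1 + lb)/2 with hθdef
  have hθ0 : 0 ≤ θ := by positivity
  have hθ1 : θ < 1 := by linarith
  have hlbθ : lb < θ := by linarith
  -- distance bound on the far part of the segment
  have hfar : ∀ s ∈ Icc θ (1:ℝ), 0 < Metric.infDist (seg s) (closure (opDom A)) := by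
    intro s hs
    rw [← (isClosed_closure).notMem_iff_infDist_pos ⟨x₀, subset_closure hx₀⟩]
    intro hmem
    have hsT : s ∈ T := ⟨⟨le_trans hθ0 hs.1, hs.2⟩, hmem⟩
    have := le_csSup hTbdd hsT
    linarith [hs.1]
  obtain ⟨s₀, hs₀, hmin'⟩ := isCompact_Icc.exists_isMinOn (nonempty_Icc.2 hθ1.le)
    ((Metric.continuous_infDist_pt (closure (opDom A))).comp hsegcont).continuousOn
  have hmin : ∀ s ∈ Icc θ (1:ℝ), Metric.infDist (seg s₀) (closure (opDom A)) ≤ Metric.infDist (seg s) (closure (opDom A)) := fun s hs => hmin' hs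
  set d := Metric.infDist (seg s₀) (closure (opDom A)) with hddef
  have hd : 0 < d := hfar s₀ hs₀
  -- compact covering
  set C := seg '' Icc (0:ℝ) θ with hCdef
  have hCcomp : IsCompact C := (isCompact_Icc).image hsegcont
  have hcover : C ⊆ ⋃ i : ↥(Icc (0:ℝ) θ), Metric.ball (seg i.1) (ε i.1 / 2) := by
    rintro x ⟨s, hs, rfl⟩
    exact mem_iUnion.2 ⟨⟨s, hs⟩, by simp [Metric.mem_ball, half_pos (hε s)]⟩
  obtain ⟨t, ht⟩ := hCcomp.elim_finite_subcover
    (fun i : ↥(Icc (0:ℝ) θ) => Metric.ball (seg i.1) (ε i.1 / 2))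
    (fun i => Metric.isOpen_ball) hcover
  have hCne : seg 0 ∈ C := ⟨0, ⟨le_refl 0, hθ0⟩, rfl⟩
  have htne : t.Nonempty := by
    obtain ⟨i, hi, -⟩ := mem_iUnion₂.1 (ht hCne)
    exact ⟨i, hi⟩
  set δ₀ := t.inf' htne (fun i => ε i.1 / 2) with hδ₀def
  have hδ₀pos : 0 < δ₀ := by
    rw [hδ₀def, Finset.lt_inf'_iff]
    exact fun i _ => half_pos (hε i.1)
  set M' := t.sup' htne (fun i => M i.1) with hM'def
  -- dual functional
  obtain ⟨f, hf1, hfz⟩ := exists_dual_vector ℝ (z - x₀) (ne_of_gt hR)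
  set g0 : X →L[ℝ] ℝ := R⁻¹ • f with hg0def
  have hg0z : g0 (z - x₀) = 1 := by
    simp only [hg0def, ContinuousLinearMap.smul_apply, hfz]
    exact inv_mul_cancel₀ hR.ne'
  have hg0bound : ∀ v : X, g0 v ≤ R⁻¹ * ‖v‖ := by
    intro v
    have h1 : f v ≤ ‖v‖ := by
      calc f v ≤ |f v| := le_abs_self _
        _ ≤ ‖f‖ * ‖v‖ := f.le_opNorm v
        _ = ‖v‖ := by rw [hf1]; ring
    have : g0 v = R⁻¹ * f v := by simp [hg0def]
    rw [this]
    exact mul_le_mul_of_nonneg_left h1 (by positivity)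
  -- the open convex set U
  set δ := min δ₀ (min d ((1 - θ) * R / 2)) with hδdef
  have hδpos : 0 < δ := lt_min hδ₀pos (lt_min hd (by nlinarith))
  have hδδ₀ : δ ≤ δ₀ := min_le_left _ _
  have hδd : δ ≤ d := le_trans (min_le_right _ _) (min_le_left _ _)
  have hδθ : δ ≤ (1 - θ) * R / 2 := le_trans (min_le_right _ _) (min_le_right _ _)
  set U := segment ℝ x₀ z + Metric.ball (0:X) δ with hUdef
  have hUopen : IsOpen U := Metric.isOpen_ball.add_left
  have hUconv : Convex ℝ U := (convex_segment x₀ z).add (convex_ball 0 δ)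
  have hx₀U : x₀ ∈ U := by
    have : x₀ + 0 ∈ U := Set.add_mem_add (left_mem_segment ℝ x₀ z) (Metric.mem_ball_self hδpos)
    simpa using this
  have hzU : z ∈ U := by
    have : z + 0 ∈ U := Set.add_mem_add (right_mem_segment ℝ x₀ z) (Metric.mem_ball_self hδpos)
    simpa using this
  -- the main bound on U
  have hmain : ∀ p ∈ A, p.1 ∈ U → p.2 (z - p.1) ≤ M' ∧ (1 - θ)/2 ≤ g0 (z - p.1) := by
    intro p hp hpU
    obtain ⟨q, hq, v, hv, hqv⟩ := Set.mem_add.1 hpU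
    rw [segment_eq_image' ℝ x₀ z] at hq
    obtain ⟨s, hs, rfl⟩ := hq
    have hvnorm : ‖v‖ < δ := by simpa [dist_eq_norm] using (Metric.mem_ball.1 hv)
    have hsθ : s ≤ θ := by
      by_contra hgt
      push_neg at hgt
      have hsIcc : s ∈ Icc θ (1:ℝ) := ⟨hgt.le, hs.2⟩
      have h1 : d ≤ Metric.infDist (seg s) (closure (opDom A)) := hmin s hsIcc
      have h2 : Metric.infDist (seg s) (closure (opDom A)) ≤ dist (seg s) p.1 :=
        Metric.infDist_le_dist_of_mem (subset_closure ⟨p.2, by simpa using hp⟩)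
      have h3 : dist (seg s) p.1 = ‖v‖ := by
        rw [dist_eq_norm]
        have : seg s - p.1 = -v := by rw [← hqv]; simp [hsegdef]
        rw [this, norm_neg]
      rw [h3] at h2
      linarith
    -- covering bound
    have hsC : seg s ∈ C := ⟨s, ⟨hs.1, hsθ⟩, rfl⟩
    obtain ⟨i, hit, hiball⟩ := mem_iUnion₂.1 (ht hsC)
    have hdist : ‖p.1 - seg i.1‖ < ε i.1 := by
      have h1 : ‖p.1 - seg s‖ < δ := by
        have : p.1 - seg s = v := by rw [← hqv]; simp [hsegdef]
        rw [this]; exact hvnorm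
      have h2 : ‖seg s - seg i.1‖ < ε i.1 / 2 := by
        rw [← dist_eq_norm]; exact Metric.mem_ball.1 hiball
      have h3 : δ ≤ ε i.1 / 2 := le_trans hδδ₀ (Finset.inf'_le _ hit)
      calc ‖p.1 - seg i.1‖ ≤ ‖p.1 - seg s‖ + ‖seg s - seg i.1‖ := by
            simpa using norm_sub_le_norm_sub_add_norm_sub p.1 (seg s) (seg i.1)
        _ < ε i.1 := by linarith
    have hi0 : (0:ℝ) ≤ i.1 := i.2.1
    have hi1 : i.1 < 1 := lt_of_le_of_lt i.2.2 hθ1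
    have hMi : p.2 (z - p.1) ≤ M i.1 := hbd i.1 hi0 hi1 p hp hdist
    constructor
    · exact le_trans hMi (Finset.le_sup' (fun i : ↥(Icc (0:ℝ) θ) => M i.1) hit)
    · -- lower bound on g0
      have hzp : z - p.1 = (1 - s) • (z - x₀) - v := by
        rw [← hqv]; simp only [hsegdef]; module
      rw [hzp, map_sub, map_smul]
      have h1 : g0 v ≤ R⁻¹ * ‖v‖ := hg0bound v
      have h2 : R⁻¹ * ‖v‖ ≤ R⁻¹ * δ := mul_le_mul_of_nonneg_left hvnorm.le (by positivity)
      have h3 : R⁻¹ * δ ≤ (1 - θ)/2 := by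
        calc R⁻¹ * δ ≤ R⁻¹ * ((1 - θ) * R / 2) :=
              mul_le_mul_of_nonneg_left hδθ (by positivity)
          _ = (1 - θ)/2 := by
              field_simp
      have h4 : (1 - θ) ≤ (1 - s) := by linarith
      simp only [smul_eq_mul, hg0z, mul_one]
      linarith
  -- monotonically related point
  have hβ : (0:ℝ) < (1 - θ)/2 := by linarith
  set c := (max M' 0 + 1)/((1 - θ)/2) with hcdef
  have hc0 : 0 ≤ c := by positivity
  set xs : X →L[ℝ] ℝ := c • g0 with hxsdef
  have hrel : MonotonicallyRelated (A ∩ ((U : Set X) ×ˢ (univ : Set (X →L[ℝ] ℝ)))) (z, xs) := by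
    rintro q ⟨hqA, hqU, -⟩
    obtain ⟨hM, hg⟩ := hmain q hqA hqU
    have h1 : c * ((1 - θ)/2) ≤ c * g0 (z - q.1) := mul_le_mul_of_nonneg_left hg hc0
    have h2 : c * ((1 - θ)/2) = max M' 0 + 1 := by
      rw [hcdef, div_mul_cancel₀ _ (ne_of_gt hβ)]
    have h3 : q.2 (z - q.1) ≤ max M' 0 := le_trans hM (le_max_left _ _)
    simp only [ContinuousLinearMap.sub_apply, hxsdef, ContinuousLinearMap.smul_apply,
      smul_eq_mul]
    linarith
  have hmem : (z, xs) ∈ A := hFPV.2 U hUopen hUconv ⟨x₀, hx₀U, hx₀⟩ z xs hzU hrel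
  exact hz (subset_closure ⟨xs, hmem⟩)
end
end

section
/- Let X be a real Banach space and let B : X ⇉ X* be maximally monotone. Suppose x ∈ X with x ∉ dom B, and let (c_k, c_k*) be a sequence in gra B with c_k → x in norm. Then the sequence (‖c_k*‖) is unbounded. -/
open Set Filter Topology

noncomputable section

variable {X : Type*} [NormedAddCommGroup X] [NormedSpace ℝ X]

/-- a sequence in the graph of a maximally monotone operator whose
first coordinates converge to a point outside the domain has unbounded dual norms. -/
theorem unbounded_of_tendsto_not_mem_dom {X : Type*} [NormedAddCommGroup X] [NormedSpace ℝ X]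
    [CompleteSpace X]
    (B : Set (X × (X →L[ℝ] ℝ)))
    (hB : IsMaxMonotoneOp B)
    (x : X) (hx : x ∉ opDom B)
    (c : ℕ → X × (X →L[ℝ] ℝ))
    (hc : ∀ k, c k ∈ B)
    (hconv : Filter.Tendsto (fun k => (c k).1) Filter.atTop (nhds x)) :
    ¬ BddAbove (Set.range fun k => ‖(c k).2‖) := by
  intro hbdd
  -- extract a bound M
  obtain ⟨M, hM⟩ := hbdd
  have hMk : ∀ k, ‖(c k).2‖ ≤ M := fun k => hM ⟨k, rfl⟩
  -- the sequence in the weak dual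
  set u : ℕ → WeakDual ℝ X := fun k => StrongDual.toWeakDual (c k).2 with hu
  have hcomp : IsCompact (WeakDual.toStrongDual ⁻¹' Metric.closedBall (0 : X →L[ℝ] ℝ) M) :=
    WeakDual.isCompact_closedBall 0 M
  have hmem : ∀ k, u k ∈ WeakDual.toStrongDual ⁻¹' Metric.closedBall (0 : X →L[ℝ] ℝ) M := by
    intro k
    simp only [Set.mem_preimage, Metric.mem_closedBall, dist_zero_right]
    exact hMk k
  have hle : Filter.map u Filter.atTop ≤ Filter.principal
      (WeakDual.toStrongDual ⁻¹' Metric.closedBall (0 : X →L[ℝ] ℝ) M) := by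
    rw [Filter.le_principal_iff, Filter.mem_map]
    exact Filter.univ_mem' hmem
  obtain ⟨xs, -, hxs⟩ := hcomp.exists_clusterPt hle
  -- xs as an element of the dual
  set x' : X →L[ℝ] ℝ := WeakDual.toStrongDual xs with hx'
  -- claim: (x, x') is monotonically related to B
  have key : ∀ q ∈ B, 0 ≤ (x' - q.2) (x - q.1) := by
    rintro ⟨y, ys⟩ hq
    by_contra hneg
    push_neg at hneg
    set ε : ℝ := -((x' - ys) (x - y)) with hε
    have hεpos : 0 < ε := by simpa [hε] using hneg
    -- eventually ψ (u k) ≥ -ε/2 where ψ w = w (x - y) - ys (x - y)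
    have hterm : Filter.Tendsto (fun k => ‖(c k).1 - x‖ * (M + ‖ys‖)) Filter.atTop (nhds 0) := by
      have h1 : Filter.Tendsto (fun k => ‖(c k).1 - x‖) Filter.atTop (nhds 0) := by
        have := (hconv.sub_const x).norm
        simpa using this
      have := h1.mul_const (M + ‖ys‖)
      simpa using this
    have hev : ∀ᶠ k in Filter.atTop,
        ((c k).2 - ys) (x - y) ∈ {r : ℝ | -(ε/2) ≤ r} := by
      have hsmall : ∀ᶠ k in Filter.atTop, ‖(c k).1 - x‖ * (M + ‖ys‖) < ε/2 := by
        have := hterm.eventually_lt_const (by positivity : (0:ℝ) < ε/2)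
        exact this
      filter_upwards [hsmall] with k hk
      have hmono : 0 ≤ ((c k).2 - ys) ((c k).1 - y) := hB.1 _ (hc k) _ hq
      have hsplit : ((c k).2 - ys) ((c k).1 - y)
          = ((c k).2 - ys) (x - y) + ((c k).2 - ys) ((c k).1 - x) := by
        rw [← map_add]
        congr 1
        abel
      have hbound : |((c k).2 - ys) ((c k).1 - x)| ≤ ‖(c k).1 - x‖ * (M + ‖ys‖) := by
        calc |((c k).2 - ys) ((c k).1 - x)| ≤ ‖(c k).2 - ys‖ * ‖(c k).1 - x‖ :=
              ((c k).2 - ys).le_opNorm _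
          _ ≤ (M + ‖ys‖) * ‖(c k).1 - x‖ := by
              apply mul_le_mul_of_nonneg_right _ (norm_nonneg _)
              calc ‖(c k).2 - ys‖ ≤ ‖(c k).2‖ + ‖ys‖ := norm_sub_le _ _
                _ ≤ M + ‖ys‖ := by linarith [hMk k]
          _ = ‖(c k).1 - x‖ * (M + ‖ys‖) := mul_comm _ _
      have habs := abs_le.mp hbound
      show -(ε/2) ≤ ((c k).2 - ys) (x - y)
      linarith [hmono, hsplit, habs.1, habs.2, hk]
    -- ψ continuous on the weak dual
    have hψcont : Continuous fun w : WeakDual ℝ X => (w (x - y) - ys (x - y) : ℝ) :=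
      (WeakDual.eval_continuous (x - y)).sub continuous_const
    -- cluster point transported by ψ
    have hclψ : ClusterPt ((xs (x - y) - ys (x - y) : ℝ))
        (Filter.map (fun k => ((u k) (x - y) - ys (x - y) : ℝ)) Filter.atTop) := by
      have hmc : MapClusterPt xs Filter.atTop u := hxs
      have := hmc.continuousAt_comp hψcont.continuousAt
      simpa [MapClusterPt, Filter.map_map, Function.comp_def] using this
    have hclmem : (xs (x - y) - ys (x - y) : ℝ) ∈ closure {r : ℝ | -(ε/2) ≤ r} := by
      have hsub : Filter.map (fun k => ((u k) (x - y) - ys (x - y) : ℝ)) Filter.atTop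
          ≤ Filter.principal {r : ℝ | -(ε/2) ≤ r} := by
        rw [Filter.le_principal_iff, Filter.mem_map]
        filter_upwards [hev] with k hk
        have heq2 : ((c k).2 - ys) (x - y) = (c k).2 (x - y) - ys (x - y) :=
          ContinuousLinearMap.sub_apply _ _ _
        show -(ε/2) ≤ (u k) (x - y) - ys (x - y)
        have hu2 : (u k) (x - y) = (c k).2 (x - y) := rfl
        rw [hu2]
        rw [heq2] at hk
        exact hk
      rw [mem_closure_iff_clusterPt]
      exact hclψ.mono hsub
    have hclosed : IsClosed {r : ℝ | -(ε/2) ≤ r} := isClosed_le continuous_const continuous_id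
    rw [hclosed.closure_eq] at hclmem
    have hval : (xs (x - y) - ys (x - y) : ℝ) = (x' - ys) (x - y) := by
      simp only [hx', ContinuousLinearMap.sub_apply]
      rfl
    rw [hval] at hclmem
    simp only [Set.mem_setOf_eq] at hclmem
    linarith [hclmem, hεpos, hε.symm]
  -- maximality: (x, x') ∈ B
  have hmono' : IsMonotoneOp (B ∪ {(x, x')}) := by
    rintro p (hp | hp) q (hq | hq)
    · exact hB.1 _ hp _ hq
    · simp only [Set.mem_singleton_iff] at hq
      subst hq
      have := key p hp
      have heq : (p.2 - x') (p.1 - x) = (x' - p.2) (x - p.1) := by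
        simp [map_sub]; ring
      rw [heq]; exact this
    · simp only [Set.mem_singleton_iff] at hp
      subst hp
      exact key q hq
    · simp only [Set.mem_singleton_iff] at hp hq
      subst hp; subst hq; simp
  have : B ∪ {(x, x')} = B := hB.2 _ hmono' Set.subset_union_left
  have hxB : (x, x') ∈ B := by
    rw [← this]; exact Or.inr rfl
  exact hx ⟨x', hxB⟩
end
end
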